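/- arXiv:1607.05776 — 4 statements merged into one kernel-verified Lean document; each statement's English description precedes it below -/
import Mathlib

section
/- The number of labeled trees on n vertices (n ≥ 1) equals n^(n-2). -/
open Function

namespace CayleyAux

variable {α : Type*} [Fintype α] [DecidableEq α]
set_option linter.unusedSectionVars false

/-- Extend a function defined off `M` to all of `α`, by the identity on `M`. -/
def ext0 (M : Finset α) (h : {x : α // x ∉ M} → α) : α → α :=
  fun x => if hx : x ∈ M then x else h ⟨x, hx⟩

/-- Every point eventually enters `M`. -/
def Good (M : Finset α) (h : {x : α // x ∉ M} → α) : Prop :=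
  ∀ x : α, ∃ k, (ext0 M h)^[k] x ∈ M

theorem reach_congr {f g : α → α} {M : Finset α} (hfg : ∀ x, x ∉ M → f x = g x) {x : α}
    (h : ∃ k, f^[k] x ∈ M) : ∃ k, g^[k] x ∈ M := by
  obtain ⟨k, hk⟩ := h
  induction k generalizing x with
  | zero => exact ⟨0, hk⟩
  | succ k ih =>
    by_cases hx : x ∈ M
    · exact ⟨0, hx⟩
    · rw [iterate_succ_apply] at hk
      obtain ⟨j, hj⟩ := ih hk
      refine ⟨j + 1, ?_⟩
      rw [iterate_succ_apply, ← hfg x hx]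
      exact hj

theorem iterate_mem {f : α → α} {M : Finset α} (hf : ∀ x ∈ M, f x ∈ M) {x : α}
    (hx : x ∈ M) (k : ℕ) : f^[k] x ∈ M := by
  induction k with
  | zero => exact hx
  | succ k ih => rw [iterate_succ_apply']; exact hf _ ih

open Classical in
/-- The recurrent set of `f`. -/
noncomputable def recS (f : α → α) : Finset α :=
  Finset.univ.filter (fun x => ∃ k, 0 < k ∧ f^[k] x = x)

theorem mem_recS {f : α → α} {x : α} : x ∈ recS f ↔ ∃ k, 0 < k ∧ f^[k] x = x := by
  classical
  simp [recS]

theorem recS_maps {f : α → α} {x : α} (hx : x ∈ recS f) : f x ∈ recS f := by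
  obtain ⟨k, hk, hfix⟩ := mem_recS.1 hx
  refine mem_recS.2 ⟨k, hk, ?_⟩
  rw [← iterate_succ_apply, iterate_succ_apply', hfix]

theorem recS_surj {f : α → α} {x : α} (hx : x ∈ recS f) : ∃ y ∈ recS f, f y = x := by
  obtain ⟨k, hk, hfix⟩ := mem_recS.1 hx
  refine ⟨f^[k - 1] x, mem_recS.2 ⟨k, hk, ?_⟩, ?_⟩
  · rw [← iterate_add_apply, show k + (k - 1) = (k - 1) + k from by omega,
      iterate_add_apply, hfix]
  · rw [show f (f^[k - 1] x) = f^[k - 1 + 1] x from (iterate_succ_apply' f (k - 1) x).symm,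
      show k - 1 + 1 = k from by omega, hfix]

theorem reach_recS (f : α → α) (x : α) : ∃ k, f^[k] x ∈ recS f := by
  obtain ⟨i, j, hne, heq⟩ := Finite.exists_ne_map_eq_of_infinite (fun k : ℕ => f^[k] x)
  rcases hne.lt_or_gt with hij | hij
  · exact ⟨i, mem_recS.2 ⟨j - i, by omega, by
      rw [← iterate_add_apply]
      have : j - i + i = j := by omega
      rw [this, ← heq]⟩⟩
  · exact ⟨j, mem_recS.2 ⟨i - j, by omega, by
      rw [← iterate_add_apply]
      have : i - j + j = i := by omega
      rw [this, heq]⟩⟩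

/-- The number of "good hangings" on `M`. -/
noncomputable def hc (M : Finset α) : ℕ := Nat.card {h : {x : α // x ∉ M} → α // Good M h}

end CayleyAux

namespace CayleyAux

variable {α : Type*} [Fintype α] [DecidableEq α]
set_option linter.unusedSectionVars false

theorem nat_card_sigma {ι : Type*} [Fintype ι] (f : ι → Type*) [∀ i, Finite (f i)] :
    Nat.card (Σ i, f i) = ∑ i, Nat.card (f i) := by
  classical
  letI : ∀ i, Fintype (f i) := fun i => Fintype.ofFinite _
  simp [Nat.card_eq_fintype_card, Fintype.card_sigma]

section Fiber1

variable (M : Finset α)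

/-- The permutation part of the decomposition. -/
def dec1fun (f : {f : α → α // recS f = M}) : {x : α // x ∈ M} → {x : α // x ∈ M} :=
  fun x => ⟨f.1 x.1, by
    obtain ⟨x, hx⟩ := x
    obtain ⟨g, hf⟩ := f
    show g x ∈ M
    subst hf
    exact recS_maps hx⟩

theorem dec1fun_bijective (f : {f : α → α // recS f = M}) :
    Function.Bijective (dec1fun M f) := by
  have hsurj : Function.Surjective (dec1fun M f) := by
    obtain ⟨f, rfl⟩ := f
    rintro ⟨y, hy⟩
    obtain ⟨z, hz, hfz⟩ := recS_surj hy
    exact ⟨⟨z, hz⟩, Subtype.ext hfz⟩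
  exact ⟨Finite.injective_iff_surjective.2 hsurj, hsurj⟩

theorem dec1good (f : {f : α → α // recS f = M}) :
    Good M (fun x : {x : α // x ∉ M} => f.1 x.1) := by
  obtain ⟨f, rfl⟩ := f
  intro x
  refine reach_congr (f := f) (fun y hy => ?_) ?_
  · simp [ext0, hy]
  · exact reach_recS f x

/-- The decomposition map for endofunctions with recurrent set `M`. -/
noncomputable def dec1 (f : {f : α → α // recS f = M}) :
    (Equiv.Perm {x : α // x ∈ M}) × {h : {x : α // x ∉ M} → α // Good M h} :=
  ⟨Equiv.ofBijective _ (dec1fun_bijective M f), ⟨fun x => f.1 x.1, dec1good M f⟩⟩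

theorem dec1_bijective : Function.Bijective (dec1 M) := by
  constructor
  · rintro ⟨f1, hf1⟩ ⟨f2, hf2⟩ h
    rw [Prod.ext_iff] at h
    obtain ⟨hσ, hh⟩ := h
    refine Subtype.ext (funext fun x => ?_)
    by_cases hx : x ∈ M
    · have := congrArg (fun σ : Equiv.Perm {x : α // x ∈ M} => (σ ⟨x, hx⟩ : α)) hσ
      simpa [dec1, dec1fun] using this
    · have := congrArg (fun h : {h : {x : α // x ∉ M} → α // Good M h} => h.1 ⟨x, hx⟩) hh
      simpa [dec1] using this
  · rintro ⟨σ, h, hGood⟩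
    set f : α → α := fun x => if hx : x ∈ M then (σ ⟨x, hx⟩ : α) else h ⟨x, hx⟩ with hfdef
    have hmaps : ∀ x ∈ M, f x ∈ M := by
      intro x hx
      simp only [hfdef, dif_pos hx]
      exact (σ ⟨x, hx⟩).2
    have hoff : ∀ x, (hx : x ∉ M) → f x = h ⟨x, hx⟩ := by
      intro x hx
      simp only [hfdef, dif_neg hx]
    have hiter : ∀ (k : ℕ) (x : α) (hx : x ∈ M), f^[k] x = ((σ ^ k) ⟨x, hx⟩ : α) := by
      intro k
      induction k with
      | zero => intro x hx; simp
      | succ k ih =>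
        intro x hx
        rw [iterate_succ_apply]
        have hfx : f x = (σ ⟨x, hx⟩ : α) := by simp only [hfdef, dif_pos hx]
        rw [hfx] at *
        rw [ih _ (σ ⟨x, hx⟩).2]
        rw [pow_succ]
        simp [Equiv.Perm.mul_apply]
    have hrec : recS f = M := by
      ext x
      constructor
      · intro hx
        obtain ⟨k, hk, hfix⟩ := mem_recS.1 hx
        obtain ⟨j, hj⟩ : ∃ j, f^[j] x ∈ M := by
          refine reach_congr (f := ext0 M h) (fun y hy => ?_) (hGood x)
          simp [ext0, hy, hoff y hy]
        have hjk : f^[k * j] x = x := by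
          rw [Function.iterate_mul]
          exact Function.iterate_fixed hfix j
        have hle : j ≤ k * j := Nat.le_mul_of_pos_left j hk
        have : f^[k * j - j + j] x ∈ M := by
          rw [iterate_add_apply]
          exact iterate_mem hmaps hj _
        rw [show k * j - j + j = k * j from by omega, hjk] at this
        exact this
      · intro hx
        refine mem_recS.2 ⟨orderOf σ, orderOf_pos σ, ?_⟩
        rw [hiter _ x hx, pow_orderOf_eq_one σ]
        rfl
    refine ⟨⟨f, hrec⟩, ?_⟩
    refine Prod.ext ?_ ?_
    · apply Equiv.ext
      rintro ⟨x, hx⟩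
      apply Subtype.ext
      show f x = _
      simp only [hfdef, dif_pos hx]
    · apply Subtype.ext
      funext x
      exact hoff x.1 x.2

theorem card_fiber1 :
    Nat.card {f : α → α // recS f = M} = M.card.factorial * hc M := by
  rw [Nat.card_eq_of_bijective _ (dec1_bijective M), Nat.card_prod]
  congr 1
  rw [Nat.card_eq_fintype_card, Fintype.card_perm, Fintype.card_coe]

theorem sum_fiber1 :
    Nat.card (α → α) = ∑ M : Finset α, M.card.factorial * hc M := by
  rw [Nat.card_congr (Equiv.sigmaFiberEquiv (recS : (α → α) → Finset α)).symm,
    nat_card_sigma]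
  exact Finset.sum_congr rfl fun M _ => card_fiber1 M

end Fiber1

end CayleyAux

namespace CayleyAux

variable {α : Type*} [Fintype α] [DecidableEq α]
set_option linter.unusedSectionVars false

/-- `p` is the parent map of a tree rooted at `b`. -/
def IsRooted (b : α) (p : α → α) : Prop := p b = b ∧ ∀ x, ∃ k, p^[k] x = b

open Classical in
/-- The forward orbit of `a` under `p`, as a `Finset`. -/
noncomputable def orbS (p : α → α) (a : α) : Finset α :=
  Finset.univ.filter (fun x => ∃ k, p^[k] a = x)

theorem mem_orbS {p : α → α} {a x : α} : x ∈ orbS p a ↔ ∃ k, p^[k] a = x := by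
  classical
  simp [orbS]

section Rooted

variable {b : α} {p : α → α} (hp : IsRooted b p) (a : α)

/-- depth of `a`: first time the orbit of `a` hits the root. -/
noncomputable def depth : ℕ := Nat.find (hp.2 a)

theorem iterate_depth_le {k : ℕ} (hk : depth hp a ≤ k) : p^[k] a = b := by
  have h1 : p^[depth hp a] a = b := Nat.find_spec (hp.2 a)
  rw [show k = (k - depth hp a) + depth hp a from by omega, iterate_add_apply, h1]
  exact Function.iterate_fixed hp.1 _

theorem iterate_ne {i j : ℕ} (hij : i < j) (hj : j ≤ depth hp a) :
    p^[i] a ≠ p^[j] a := by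
  intro heq
  have per : ∀ m, p^[i + m * (j - i)] a = p^[i] a := by
    intro m
    induction m with
    | zero => simp
    | succ m ih =>
      have e1 : i + (m + 1) * (j - i) = (j - i) + (i + m * (j - i)) := by
        generalize j - i = x; ring
      rw [e1, iterate_add_apply, ih, ← iterate_add_apply,
        show j - i + i = j from by omega, ← heq]
  have hb : p^[i + depth hp a * (j - i)] a = b := by
    refine iterate_depth_le hp a ?_
    have : 1 ≤ j - i := by omega
    nlinarith [Nat.le_mul_of_pos_right (depth hp a) this]
  rw [per _] at hb
  exact Nat.find_min (hp.2 a) (show i < depth hp a from by omega) hb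

theorem orbS_eq : orbS p a = (Finset.range (depth hp a + 1)).image (fun k => p^[k] a) := by
  ext x
  simp only [mem_orbS, Finset.mem_image, Finset.mem_range]
  constructor
  · rintro ⟨k, rfl⟩
    rcases le_or_gt k (depth hp a) with h | h
    · exact ⟨k, by omega, rfl⟩
    · exact ⟨depth hp a, by omega, by
        rw [iterate_depth_le hp a le_rfl, iterate_depth_le hp a (le_of_lt h)]⟩
  · rintro ⟨k, _, rfl⟩
    exact ⟨k, rfl⟩

theorem card_orbS : (orbS p a).card = depth hp a + 1 := by
  rw [orbS_eq hp a, Finset.card_image_of_injOn, Finset.card_range]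
  intro i hi j hj hij
  simp only [Finset.coe_range, Set.mem_Iio] at hi hj
  by_contra hne
  rcases Nat.lt_or_ge i j with h | h
  · exact iterate_ne hp a h (by omega) hij
  · exact iterate_ne hp a (show j < i from by omega) (by omega) hij.symm

theorem iterate_mem_orbS (k : ℕ) : p^[k] a ∈ orbS p a := mem_orbS.2 ⟨k, rfl⟩

include hp in
theorem root_mem_orbS : b ∈ orbS p a :=
  mem_orbS.2 ⟨depth hp a, iterate_depth_le hp a le_rfl⟩

end Rooted

/-- Doubly rooted trees: a root `b`, a parent map rooted at `b`, and a marked vertex. -/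
def DRT (α : Type*) := Σ _b : α, {p : α → α // IsRooted _b p} × α

/-- fiber map for `DRT`. -/
noncomputable def fib (q : DRT α) : Finset α := orbS q.2.1.1 q.2.2

end CayleyAux

namespace CayleyAux

variable {α : Type*} [Fintype α] [DecidableEq α]
set_option linter.unusedSectionVars false

section Fiber2

variable (M : Finset α)

/-- The linear-order part of the decomposition of a doubly rooted tree. -/
def dec2fun (q : {q : DRT α // fib q = M}) : Fin M.card → {x : α // x ∈ M} :=
  fun j => ⟨(q.1.2.1.1)^[j] q.1.2.2, by
    obtain ⟨⟨b, ⟨p, hp⟩, a⟩, hM⟩ := q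
    show p^[(j : ℕ)] a ∈ M
    have hmem : p^[(j : ℕ)] a ∈ orbS p a := iterate_mem_orbS a (j : ℕ)
    rwa [show orbS p a = M from hM] at hmem⟩

theorem dec2fun_bijective (q : {q : DRT α // fib q = M}) :
    Function.Bijective (dec2fun M q) := by
  obtain ⟨⟨b, ⟨p, hp⟩, a⟩, hM⟩ := q
  have hM' : orbS p a = M := hM
  have hcard : M.card = depth hp a + 1 := by rw [← hM']; exact card_orbS hp a
  constructor
  · intro i j hij
    have hval : p^[(i : ℕ)] a = p^[(j : ℕ)] a := congrArg Subtype.val hij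
    by_contra hne
    have hne' : (i : ℕ) ≠ (j : ℕ) := fun h => hne (Fin.ext h)
    rcases Nat.lt_or_ge (i : ℕ) (j : ℕ) with h | h
    · exact iterate_ne hp a h (by omega) hval
    · exact iterate_ne hp a (show (j : ℕ) < i from by omega) (by omega) hval.symm
  · rintro ⟨y, hy⟩
    rw [← hM'] at hy
    obtain ⟨k, hk⟩ := mem_orbS.1 hy
    rcases le_or_gt k (depth hp a) with h | h
    · exact ⟨⟨k, by omega⟩, Subtype.ext hk⟩
    · refine ⟨⟨depth hp a, by omega⟩, Subtype.ext ?_⟩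
      show p^[depth hp a] a = y
      rw [iterate_depth_le hp a le_rfl, ← hk, iterate_depth_le hp a (le_of_lt h)]

theorem dec2good (q : {q : DRT α // fib q = M}) :
    Good M (fun x : {x : α // x ∉ M} => q.1.2.1.1 x.1) := by
  obtain ⟨⟨b, ⟨p, hp⟩, a⟩, hM⟩ := q
  have hM' : orbS p a = M := hM
  intro x
  refine reach_congr (f := p) (fun y hy => ?_) ?_
  · simp [ext0, hy]
  · obtain ⟨k, hk⟩ := hp.2 x
    exact ⟨k, by rw [hk, ← hM']; exact root_mem_orbS hp a⟩

/-- The decomposition map for doubly rooted trees with spine `M`. -/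
noncomputable def dec2 (q : {q : DRT α // fib q = M}) :
    (Fin M.card ≃ {x : α // x ∈ M}) × {h : {x : α // x ∉ M} → α // Good M h} :=
  ⟨Equiv.ofBijective _ (dec2fun_bijective M q), ⟨_, dec2good M q⟩⟩

theorem dec2_bijective [Nonempty α] : Function.Bijective (dec2 M) := by
  constructor
  · rintro ⟨⟨b1, ⟨p1, hp1⟩, a1⟩, hM1⟩ ⟨⟨b2, ⟨p2, hp2⟩, a2⟩, hM2⟩ h
    rw [Prod.ext_iff] at h
    obtain ⟨hℓ, hh⟩ := h
    have hM1' : orbS p1 a1 = M := hM1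
    have hM2' : orbS p2 a2 = M := hM2
    have hcard1 : M.card = depth hp1 a1 + 1 := by rw [← hM1']; exact card_orbS hp1 a1
    have hcard2 : M.card = depth hp2 a2 + 1 := by rw [← hM2']; exact card_orbS hp2 a2
    have hpos : 0 < M.card := by omega
    have key : ∀ (j : ℕ) (hj : j < M.card), p1^[j] a1 = p2^[j] a2 := by
      intro j hj
      have := congrArg (fun ℓ : Fin M.card ≃ {x : α // x ∈ M} => (ℓ ⟨j, hj⟩ : α)) hℓ
      simpa [dec2, dec2fun] using this
    have ha : a1 = a2 := by
      have := key 0 hpos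
      simpa using this
    have hb : b1 = b2 := by
      have h1 : p1^[M.card - 1] a1 = b1 := iterate_depth_le hp1 a1 (by omega)
      have h2 : p2^[M.card - 1] a2 = b2 := iterate_depth_le hp2 a2 (by omega)
      rw [← h1, ← h2, key _ (by omega)]
    have hp : p1 = p2 := by
      funext x
      by_cases hx : x ∈ M
      · rw [← hM1'] at hx
        obtain ⟨k, hk⟩ := mem_orbS.1 hx
        have hk' : p1^[min k (depth hp1 a1)] a1 = x := by
          rcases le_or_gt k (depth hp1 a1) with h | h
          · rwa [min_eq_left h]
          · rw [min_eq_right (le_of_lt h), iterate_depth_le hp1 a1 le_rfl, ← hk,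
              iterate_depth_le hp1 a1 (le_of_lt h)]
        set k' := min k (depth hp1 a1) with hk'def
        have hklt : k' < M.card := by
          have := min_le_right k (depth hp1 a1); omega
        have e1 : p1 x = p1^[k' + 1] a1 := by
          rw [← hk']; exact (iterate_succ_apply' p1 k' a1).symm
        have e2 : p2 x = p2^[k' + 1] a2 := by
          rw [← hk', key k' hklt]; exact (iterate_succ_apply' p2 k' a2).symm
        rcases Nat.lt_or_ge (k' + 1) M.card with h | h
        · rw [e1, e2, key _ h]
        · rw [e1, e2, iterate_depth_le hp1 a1 (by omega), iterate_depth_le hp2 a2 (by omega),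
            hb]
      · have := congrArg
          (fun h : {h : {x : α // x ∉ M} → α // Good M h} => h.1 ⟨x, hx⟩) hh
        simpa [dec2] using this
    subst ha hb hp
    rfl
  · rintro ⟨ℓ, h, hGood⟩
    have hpos : 0 < M.card := by
      obtain ⟨k, hk⟩ := hGood (Classical.arbitrary α)
      exact Finset.card_pos.2 ⟨_, hk⟩
    set p : α → α := fun x => if hx : x ∈ M then
        (if hj : ((ℓ.symm ⟨x, hx⟩ : Fin M.card) : ℕ) + 1 < M.card then
          (ℓ ⟨((ℓ.symm ⟨x, hx⟩ : Fin M.card) : ℕ) + 1, hj⟩ : α) else x)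
      else h ⟨x, hx⟩ with hpdef
    set a : α := (ℓ ⟨0, hpos⟩ : α) with hadef
    set b : α := (ℓ ⟨M.card - 1, by omega⟩ : α) with hbdef
    have t0 : ∀ x ∈ M, p x ∈ M := by
      intro x hx
      rw [hpdef]
      simp only [dif_pos hx]
      split
      · exact (ℓ _).2
      · exact hx
    have hoff : ∀ x, (hx : x ∉ M) → p x = h ⟨x, hx⟩ := by
      intro x hx
      rw [hpdef]; simp only [dif_neg hx]
    have t2 : ∀ (j : ℕ) (hj : j < M.card) (hj1 : j + 1 < M.card),
        p (ℓ ⟨j, hj⟩ : α) = (ℓ ⟨j + 1, hj1⟩ : α) := by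
      intro j hj hj1
      rw [hpdef]
      simp only [dif_pos (ℓ ⟨j, hj⟩).2, Subtype.coe_eta, Equiv.symm_apply_apply]
      simp only [dif_pos hj1]
    have t1 : p b = b := by
      rw [hbdef, hpdef]
      simp only [dif_pos (ℓ _).2, Subtype.coe_eta, Equiv.symm_apply_apply]
      rw [dif_neg (by omega)]
    have t3 : ∀ (m j : ℕ) (hj : j < M.card), j + m = M.card - 1 →
        p^[m] (ℓ ⟨j, hj⟩ : α) = b := by
      intro m
      induction m with
      | zero =>
        intro j hj hjm
        have hje : j = M.card - 1 := by omega
        subst hje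
        simp only [iterate_zero, id_eq, hbdef]
      | succ m ih =>
        intro j hj hjm
        rw [iterate_succ_apply, t2 j hj (by omega)]
        exact ih (j + 1) (by omega) (by omega)
    have treach : ∀ x ∈ M, ∃ m, p^[m] x = b := by
      intro x hx
      set j := ℓ.symm ⟨x, hx⟩ with hjdef
      have hjl : (j : ℕ) < M.card := j.isLt
      have hx' : ((ℓ ⟨(j : ℕ), hjl⟩ : {x : α // x ∈ M}) : α) = x := by
        simp only [hjdef, Fin.eta, Equiv.apply_symm_apply]
      refine ⟨M.card - 1 - (j : ℕ), ?_⟩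
      have h3 := t3 (M.card - 1 - (j : ℕ)) (j : ℕ) hjl (by omega)
      rwa [hx'] at h3
    have t4 : IsRooted b p := by
      refine ⟨t1, fun x => ?_⟩
      by_cases hx : x ∈ M
      · exact treach x hx
      · obtain ⟨k, hk⟩ : ∃ k, p^[k] x ∈ M := by
          refine reach_congr (f := ext0 M h) (fun y hy => ?_) (hGood x)
          rw [hoff y hy]; simp [ext0, hy]
        obtain ⟨m, hm⟩ := treach _ hk
        exact ⟨m + k, by rw [iterate_add_apply, hm]⟩
    have t5 : ∀ (j : ℕ) (hj : j < M.card), p^[j] a = (ℓ ⟨j, hj⟩ : α) := by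
      intro j
      induction j with
      | zero => intro hj; simp [hadef]
      | succ j ih =>
        intro hj
        rw [iterate_succ_apply', ih (by omega), t2 j (by omega) hj]
    have t6 : fib (⟨b, ⟨p, t4⟩, a⟩ : DRT α) = M := by
      show orbS p a = M
      ext x
      rw [mem_orbS]
      constructor
      · rintro ⟨k, rfl⟩
        exact iterate_mem t0 (by rw [hadef]; exact (ℓ _).2) k
      · intro hx
        refine ⟨(ℓ.symm ⟨x, hx⟩ : Fin M.card), ?_⟩
        rw [t5 _ (ℓ.symm ⟨x, hx⟩).2]
        simp only [Fin.eta, Equiv.apply_symm_apply]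
    refine ⟨⟨⟨b, ⟨p, t4⟩, a⟩, t6⟩, ?_⟩
    refine Prod.ext ?_ ?_
    · apply Equiv.ext
      intro j
      apply Subtype.ext
      show p^[(j : ℕ)] a = (ℓ j : α)
      rw [t5 _ j.2]
    · apply Subtype.ext
      funext x
      show p x.1 = h x
      rw [hoff x.1 x.2]

theorem card_fiber2 [Nonempty α] :
    Nat.card {q : DRT α // fib q = M} = M.card.factorial * hc M := by
  rw [Nat.card_eq_of_bijective _ (dec2_bijective M), Nat.card_prod]
  congr 1
  rw [Nat.card_eq_fintype_card, Fintype.card_equiv (Fintype.equivFinOfCardEq (by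
    rw [Fintype.card_coe]) : {x : α // x ∈ M} ≃ Fin M.card).symm]
  simp

instance : Finite (DRT α) := by unfold DRT; infer_instance

theorem sum_fiber2 [Nonempty α] :
    Nat.card (DRT α) = ∑ M : Finset α, M.card.factorial * hc M := by
  rw [Nat.card_congr (Equiv.sigmaFiberEquiv (fib : DRT α → Finset α)).symm,
    nat_card_sigma]
  exact Finset.sum_congr rfl fun M _ => card_fiber2 M

end Fiber2

end CayleyAux

namespace CayleyAux

variable {α : Type*} [Fintype α] [DecidableEq α]
set_option linter.unusedSectionVars false

theorem conj_iterate (e : α ≃ α) (p : α → α) (k : ℕ) (x : α) :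
    (fun y => e (p (e.symm y)))^[k] x = e (p^[k] (e.symm x)) := by
  induction k generalizing x with
  | zero => simp
  | succ k ih => rw [iterate_succ_apply, ih]; simp

theorem conj_rooted (e : α ≃ α) {b : α} {p : α → α} (hp : IsRooted b p) :
    IsRooted (e b) (fun y => e (p (e.symm y))) := by
  constructor
  · simp [hp.1]
  · intro x
    obtain ⟨k, hk⟩ := hp.2 (e.symm x)
    exact ⟨k, by rw [conj_iterate, hk]⟩

/-- Conjugation by a swap identifies trees with different roots. -/
def conjRooted (b b' : α) : {p : α → α // IsRooted b p} ≃ {p : α → α // IsRooted b' p} where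
  toFun p := ⟨fun y => Equiv.swap b b' (p.1 ((Equiv.swap b b').symm y)), by
    have := conj_rooted (Equiv.swap b b') p.2
    rwa [Equiv.swap_apply_left] at this⟩
  invFun p := ⟨fun y => (Equiv.swap b b').symm (p.1 (Equiv.swap b b' y)), by
    have := conj_rooted (Equiv.swap b b').symm p.2
    rwa [Equiv.symm_symm, Equiv.symm_swap, Equiv.swap_apply_right] at this⟩
  left_inv p := by
    apply Subtype.ext
    funext x
    simp
  right_inv p := by
    apply Subtype.ext
    funext x
    simp

theorem main_count [Nonempty α] (b0 : α) :
    Nat.card {p : α → α // IsRooted b0 p} * (Fintype.card α * Fintype.card α) =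
      Fintype.card α ^ Fintype.card α := by
  have h1 : Nat.card (DRT α) = Fintype.card α ^ Fintype.card α := by
    rw [sum_fiber2, ← sum_fiber1, Nat.card_eq_fintype_card, Fintype.card_fun]
  have h2 : Nat.card (DRT α) =
      Fintype.card α * (Nat.card {p : α → α // IsRooted b0 p} * Fintype.card α) := by
    have : Nat.card (DRT α) = ∑ b : α, Nat.card ({p : α → α // IsRooted b p} × α) := by
      unfold DRT
      rw [nat_card_sigma]
    rw [this]
    have : ∀ b : α, Nat.card ({p : α → α // IsRooted b p} × α) =
        Nat.card {p : α → α // IsRooted b0 p} * Fintype.card α := by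
      intro b
      rw [Nat.card_prod, Nat.card_congr (conjRooted b b0)]
      congr 1
      exact Nat.card_eq_fintype_card
    rw [Finset.sum_congr rfl (fun b _ => this b), Finset.sum_const, Finset.card_univ,
      smul_eq_mul]
  rw [← h1, h2]
  ring

end CayleyAux

namespace CayleyAux

open SimpleGraph Walk

variable {α : Type*} [Fintype α] [DecidableEq α]
set_option linter.unusedSectionVars false

section Trees

variable (r : α)

/-- The chosen unique path from `v` to `r` in a tree. -/
noncomputable def tpath {G : SimpleGraph α} (hG : G.IsTree) (v : α) : G.Walk v r :=
  (hG.existsUnique_path v r).choose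

theorem tpath_isPath {G : SimpleGraph α} (hG : G.IsTree) (v : α) : (tpath r hG v).IsPath :=
  (hG.existsUnique_path v r).choose_spec.1

theorem tpath_unique {G : SimpleGraph α} (hG : G.IsTree) {v : α} (q : G.Walk v r)
    (hq : q.IsPath) : q = tpath r hG v :=
  (hG.existsUnique_path v r).choose_spec.2 q hq

/-- The parent map of a tree, with root `r`. -/
noncomputable def par {G : SimpleGraph α} (hG : G.IsTree) (v : α) : α :=
  if v = r then r else (tpath r hG v).getVert 1

theorem par_root {G : SimpleGraph α} (hG : G.IsTree) : par r hG r = r := by simp [par]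

theorem tpath_tail {G : SimpleGraph α} (hG : G.IsTree) {v : α} (hv : v ≠ r) :
    (tpath r hG v).tail = tpath r hG ((tpath r hG v).getVert 1) :=
  tpath_unique r hG _ ((tpath_isPath r hG v).tail)

theorem par_eq_getVert {G : SimpleGraph α} (hG : G.IsTree) {v : α} (hv : v ≠ r) :
    par r hG v = (tpath r hG v).getVert 1 := by simp [par, hv]

theorem length_par_lt {G : SimpleGraph α} (hG : G.IsTree) {v : α} (hv : v ≠ r) :
    (tpath r hG (par r hG v)).length + 1 = (tpath r hG v).length := by
  rw [par_eq_getVert r hG hv, ← tpath_tail r hG hv]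
  exact length_tail_add_one (not_nil_of_ne hv)

theorem par_reach {G : SimpleGraph α} (hG : G.IsTree) (v : α) :
    ∃ k, (par r hG)^[k] v = r := by
  suffices H : ∀ (n : ℕ) (v : α), (tpath r hG v).length ≤ n → ∃ k, (par r hG)^[k] v = r by
    exact H (tpath r hG v).length v le_rfl
  intro n
  induction n with
  | zero =>
    intro v hv
    exact ⟨0, eq_of_length_eq_zero (Nat.le_zero.1 hv)⟩
  | succ n ih =>
    intro v hv
    by_cases hvr : v = r
    · exact ⟨0, hvr⟩
    · obtain ⟨k, hk⟩ := ih (par r hG v) (by have := length_par_lt r hG hvr; omega)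
      exact ⟨k + 1, by rw [iterate_succ_apply, hk]⟩

theorem par_isRooted {G : SimpleGraph α} (hG : G.IsTree) : IsRooted r (par r hG) :=
  ⟨par_root r hG, par_reach r hG⟩

theorem adj_of_par {G : SimpleGraph α} (hG : G.IsTree) {u v : α} (hne : u ≠ v)
    (hp : par r hG u = v) : G.Adj u v := by
  have hur : u ≠ r := by
    intro h
    rw [h, par_root r hG] at hp
    exact hne (h.trans hp)
  have hlen : 0 < (tpath r hG u).length := by
    rcases Nat.eq_zero_or_pos (tpath r hG u).length with h | h
    · exact absurd (eq_of_length_eq_zero h) hur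
    · exact h
  have h2 := (tpath r hG u).adj_getVert_succ (i := 0) hlen
  rw [getVert_zero] at h2
  simp only [zero_add] at h2
  rw [par_eq_getVert r hG hur] at hp
  rwa [hp] at h2

theorem par_adj {G : SimpleGraph α} (hG : G.IsTree) {u v : α} (hadj : G.Adj u v) :
    par r hG u = v ∨ par r hG v = u := by
  by_cases hu : u ∈ (tpath r hG v).support
  · -- then v ∉ (tpath u).support, and the path from v goes through u
    right
    have hdrop : (tpath r hG v).dropUntil u hu = tpath r hG u :=
      tpath_unique r hG _ ((tpath_isPath r hG v).dropUntil hu)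
    have hvnotin : v ∉ (tpath r hG u).support := by
      rw [← hdrop]
      intro hvmem
      have hnodup := (tpath_isPath r hG v).support_nodup
      have hspec := (tpath r hG v).take_spec hu
      have hsupp := support_append ((tpath r hG v).takeUntil u hu) ((tpath r hG v).dropUntil u hu)
      rw [hspec] at hsupp
      rw [hsupp] at hnodup
      have hdisj := List.disjoint_of_nodup_append hnodup
      have hv1 : v ∈ ((tpath r hG v).takeUntil u hu).support := start_mem_support _
      have hv2 : v ∈ ((tpath r hG v).dropUntil u hu).support.tail := by
        have := support_eq_cons ((tpath r hG v).dropUntil u hu)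
        rw [this] at hvmem
        rcases List.mem_cons.1 hvmem with h | h
        · exact absurd h.symm hadj.ne
        · exact h
      exact hdisj hv1 hv2
    have hpath : (Walk.cons hadj.symm (tpath r hG u)).IsPath :=
      (tpath_isPath r hG u).cons hvnotin
    have := tpath_unique r hG _ hpath
    have hvr : v ≠ r := by
      intro h
      exact hvnotin (by rw [h]; exact end_mem_support _)
    rw [par_eq_getVert r hG hvr, ← this]
    simp
  · left
    have hpath : (Walk.cons hadj (tpath r hG v)).IsPath :=
      (tpath_isPath r hG v).cons hu
    have := tpath_unique r hG _ hpath
    have hur : u ≠ r := by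
      intro h
      exact hu (by rw [h]; exact end_mem_support _)
    rw [par_eq_getVert r hG hur, ← this]
    simp

theorem adj_iff_par {G : SimpleGraph α} (hG : G.IsTree) (u v : α) :
    G.Adj u v ↔ u ≠ v ∧ (par r hG u = v ∨ par r hG v = u) := by
  constructor
  · intro hadj
    exact ⟨hadj.ne, par_adj r hG hadj⟩
  · rintro ⟨hne, h | h⟩
    · exact adj_of_par r hG hne h
    · exact (adj_of_par r hG (Ne.symm hne) h).symm

end Trees

end CayleyAux

namespace CayleyAux

open SimpleGraph Walk

variable {α : Type*} [Fintype α] [DecidableEq α]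
set_option linter.unusedSectionVars false

section FromFun

variable (r : α)

/-- The graph determined by a parent map. -/
def graphOf (p : α → α) : SimpleGraph α where
  Adj u v := u ≠ v ∧ (p u = v ∨ p v = u)
  symm := .mk <| by
    rintro u v ⟨hne, h | h⟩
    exacts [⟨hne.symm, Or.inr h⟩, ⟨hne.symm, Or.inl h⟩]
  loopless := .mk <| by rintro u ⟨hne, -⟩; exact hne rfl

variable {p : α → α} (hp : IsRooted r p)

include hp in
theorem par_ne {v : α} (hv : v ≠ r) : p v ≠ v := by
  intro h
  obtain ⟨k, hk⟩ := hp.2 v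
  rw [Function.iterate_fixed h k] at hk
  exact hv hk

include hp in
theorem adj_par {v : α} (hv : v ≠ r) : (graphOf p).Adj v (p v) :=
  ⟨Ne.symm (par_ne r hp hv), Or.inl rfl⟩

include hp in
theorem depth_par {v : α} (hv : v ≠ r) :
    depth hp (p v) + 1 = depth hp v := by
  have h1 : p^[depth hp v] v = r := Nat.find_spec (hp.2 v)
  have hd1 : 1 ≤ depth hp v := by
    rcases Nat.eq_zero_or_pos (depth hp v) with h | h
    · rw [h] at h1; exact absurd h1 hv
    · exact h
  have h2 : p^[depth hp v - 1] (p v) = r := by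
    have h1' := h1
    rw [show depth hp v = (depth hp v - 1) + 1 from by omega] at h1'
    rwa [iterate_succ_apply] at h1'
  have hle : depth hp (p v) ≤ depth hp v - 1 := Nat.find_le h2
  have h3 : p^[depth hp (p v) + 1] v = r := by
    rw [iterate_succ_apply]
    exact Nat.find_spec (hp.2 (p v))
  have hge : depth hp v ≤ depth hp (p v) + 1 := Nat.find_le h3
  omega

include hp in
theorem par_of_adj_le {u v : α} (hadj : (graphOf p).Adj u v)
    (hle : depth hp v ≤ depth hp u) : p u = v := by
  obtain ⟨hne, h | h⟩ := hadj
  · exact h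
  · exfalso
    have hvr : v ≠ r := by
      intro hv
      rw [hv, hp.1] at h
      exact hne (h ▸ hv).symm
    have := depth_par r hp hvr
    rw [h] at this
    omega

end FromFun

/-- Canonical walk to the root. -/
def pwalk (r0 : α) {p0 : α → α} (hp0 : IsRooted r0 p0) :
    (k : ℕ) → (v : α) → p0^[k] v = r0 → (graphOf p0).Walk v r0
  | 0, _v, h => Walk.nil.copy (by simpa using h.symm) rfl
  | k + 1, v, h =>
    if hv : v = r0 then Walk.nil.copy hv.symm rfl
    else Walk.cons (adj_par r0 hp0 hv) (pwalk r0 hp0 k (p0 v) (by rwa [iterate_succ_apply] at h))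

section FromFun2

variable (r : α) {p : α → α} (hp : IsRooted r p)

theorem pwalk_support_depth {k : ℕ} {v : α} (h : p^[k] v = r) :
    ∀ x ∈ (pwalk r hp k v h).support, depth hp x ≤ depth hp v := by
  induction k generalizing v with
  | zero =>
    intro x hx
    change x ∈ (Walk.copy (Walk.nil : (graphOf p).Walk r r) h.symm rfl).support at hx
    simp only [support_copy, support_nil, List.mem_singleton] at hx
    have hv : v = r := by simpa using h
    exact le_of_eq (by rw [hx]; exact congrArg (fun t => depth hp t) hv.symm)
  | succ k ih =>
    intro x hx
    by_cases hv : v = r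
    · simp only [pwalk, dif_pos hv, support_copy, support_nil, List.mem_singleton] at hx
      exact le_of_eq (by rw [hx]; exact congrArg (fun t => depth hp t) hv.symm)
    · simp only [pwalk, dif_neg hv, support_cons, List.mem_cons] at hx
      rcases hx with rfl | hx
      · exact le_rfl
      · have := ih (by rwa [iterate_succ_apply] at h) x hx
        have h2 := depth_par r hp hv
        omega

theorem pwalk_isPath {k : ℕ} {v : α} (h : p^[k] v = r) :
    (pwalk r hp k v h).IsPath := by
  induction k generalizing v with
  | zero => exact (isPath_copy (Walk.nil : (graphOf p).Walk r r) (u' := v) (by simpa using h.symm) rfl).2 IsPath.nil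
  | succ k ih =>
    by_cases hv : v = r
    · simp [pwalk, dif_pos hv]
    · rw [pwalk, dif_neg hv]
      refine (ih _).cons ?_
      intro hmem
      have h1 := pwalk_support_depth r hp _ v hmem
      have h2 := depth_par r hp hv
      omega

theorem pwalk_getVert_one {k : ℕ} {v : α} (h : p^[k] v = r) (hv : v ≠ r) :
    (pwalk r hp k v h).getVert 1 = p v := by
  cases k with
  | zero => exact absurd (by simpa using h) hv
  | succ k =>
    rw [pwalk, dif_neg hv]
    simp

include hp in
theorem graphOf_connected : (graphOf p).Connected := by
  have hne : Nonempty α := ⟨r⟩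
  refine ⟨fun u v => ?_⟩
  obtain ⟨k, hk⟩ := hp.2 u
  obtain ⟨m, hm⟩ := hp.2 v
  exact (pwalk r hp k u hk).reachable.trans (pwalk r hp m v hm).reachable.symm

include hp in
theorem graphOf_acyclic : (graphOf p).IsAcyclic := by
  have aux : ∀ (w : α) (c : (graphOf p).Walk w w), c.IsCycle →
      (∀ y ∈ c.support, depth hp y ≤ depth hp w) → False := by
    intro w c hc hmax
    cases c with
    | nil => exact hc.not_of_nil
    | @cons _ y _ h q =>
      obtain ⟨hqpath, hedge⟩ := (Walk.cons_isCycle_iff q h).1 hc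
      have hql : 2 ≤ q.length := by
        have := hc.three_le_length
        simp only [Walk.length_cons] at this
        omega
      -- look at the reverse of q to find the other neighbor of w
      have hyw : depth hp y ≤ depth hp w := by
        apply hmax
        rw [Walk.support_cons]
        exact List.mem_cons_of_mem _ (start_mem_support q)
      have hpwy : p w = y := par_of_adj_le r hp h hyw
      cases hq : q.reverse with
      | nil =>
        exfalso
        have : q.length = 0 := by
          have := congrArg Walk.length hq
          simpa using this
        omega
      | @cons _ z _ h2 r2 =>
        have hz : z ∈ q.support := by
          have : z ∈ q.reverse.support := by
            rw [hq, Walk.support_cons]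
            exact List.mem_cons_of_mem _ (start_mem_support r2)
          rwa [support_reverse, List.mem_reverse] at this
        have hzw : depth hp z ≤ depth hp w := by
          apply hmax
          simp [Walk.support_cons]
          right
          exact hz
        have hpwz : p w = z := par_of_adj_le r hp h2 hzw
        have hyz : y = z := hpwy ▸ hpwz
        have : s(w, z) ∈ q.edges := by
          have : s(w, z) ∈ q.reverse.edges := by
            rw [hq, Walk.edges_cons]
            exact List.mem_cons_self
          rwa [edges_reverse, List.mem_reverse] at this
        rw [← hyz] at this
        exact hedge this
  intro v c hc
  have hsupp : c.support.toFinset.Nonempty := by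
    refine ⟨v, ?_⟩
    rw [List.mem_toFinset]
    exact start_mem_support c
  obtain ⟨w, hw, hmax⟩ := c.support.toFinset.exists_max_image (fun y => depth hp y) hsupp
  rw [List.mem_toFinset] at hw
  refine aux w (c.rotate w hw) (hc.rotate hw) ?_
  intro y hy
  refine hmax y ?_
  rw [List.mem_toFinset]
  have := support_rotate c w hw
  rcases List.mem_cons.1 ((support_eq_cons (c.rotate w hw)) ▸ hy) with rfl | hy'
  · exact hw
  · have : y ∈ c.support.tail := (this.mem_iff).1 hy'
    exact List.mem_of_mem_tail this

include hp in
theorem graphOf_isTree : (graphOf p).IsTree :=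
  ⟨graphOf_connected r hp, graphOf_acyclic r hp⟩

end FromFun2

end CayleyAux

namespace CayleyAux

open SimpleGraph Walk

variable {α : Type*} [Fintype α] [DecidableEq α]
set_option linter.unusedSectionVars false

theorem card_trees (r : α) :
    Nat.card {G : SimpleGraph α // G.IsTree} = Nat.card {p : α → α // IsRooted r p} := by
  refine Nat.card_eq_of_bijective
    (fun G => ⟨par r G.2, par_isRooted r G.2⟩) ⟨?_, ?_⟩
  · rintro ⟨G1, h1⟩ ⟨G2, h2⟩ h
    have hpar : par r h1 = par r h2 := congrArg Subtype.val h
    apply Subtype.ext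
    ext u v
    rw [adj_iff_par r h1, adj_iff_par r h2, hpar]
  · rintro ⟨p, hp⟩
    refine ⟨⟨graphOf p, graphOf_isTree r hp⟩, Subtype.ext (funext fun v => ?_)⟩
    show par r (graphOf_isTree r hp) v = p v
    by_cases hv : v = r
    · rw [hv, par_root, hp.1]
    · obtain ⟨k, hk⟩ := hp.2 v
      have heq := tpath_unique r (graphOf_isTree r hp) (pwalk r hp k v hk)
        (pwalk_isPath r hp hk)
      rw [par_eq_getVert r (graphOf_isTree r hp) hv, ← heq,
        pwalk_getVert_one r hp hk hv]

end CayleyAux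

/-- Cayley's formula: the number of labeled trees on `n ≥ 1` vertices equals `n^(n-2)`
(with `n^(n-2)` interpreted as `1` for `n = 1`, as truncated subtraction gives). -/
theorem cayley_formula (n : ℕ) (hn : 1 ≤ n) :
    Nat.card {G : SimpleGraph (Fin n) // G.IsTree} = n ^ (n - 2) := by
  haveI : Nonempty (Fin n) := ⟨⟨0, hn⟩⟩
  have h1 := CayleyAux.card_trees (α := Fin n) ⟨0, hn⟩
  have h2 := CayleyAux.main_count (α := Fin n) ⟨0, hn⟩
  rw [Fintype.card_fin] at h2
  rw [h1]
  rcases Nat.lt_or_ge n 2 with h | h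
  · have hn1 : n = 1 := by omega
    subst hn1
    simpa using h2
  · have h3 : n ^ n = n ^ (n - 2) * (n * n) := by
      rw [show n * n = n ^ 2 from (sq n).symm, ← pow_add,
        show n - 2 + 2 = n from by omega]
    refine Nat.eq_of_mul_eq_mul_right (show 0 < n * n by positivity) ?_
    rw [h2, h3]
end

section
/- If R(x) is a formal power series over ℚ with zero constant term satisfying R(x) = x · exp(R(x)), then for every n ≥ 1 the coefficient of x^n in R(x) equals n^(n-1)/n!. -/
open PowerSeries

/-- Composition `Φ(R)` of formal power series, valid when `R` has zero constant term:
the coefficient of `x^m` is `∑_{k ≤ m} ([z^k] Φ) · [x^m](R^k)`. -/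
noncomputable def psComp {K : Type*} [CommRing K] (Φ R : PowerSeries K) : PowerSeries K :=
  PowerSeries.mk fun m => ∑ k ∈ Finset.range (m + 1),
    (PowerSeries.coeff k Φ) * PowerSeries.coeff m (R ^ k)

lemma coeff_pow_zero_of_lt (R : PowerSeries ℚ) (h0 : PowerSeries.constantCoeff R = 0)
    {m j : ℕ} (h : m < j) : PowerSeries.coeff m (R ^ j) = 0 := by
  have hX : (PowerSeries.X : PowerSeries ℚ) ^ j ∣ R ^ j :=
    pow_dvd_pow_of_dvd (PowerSeries.X_dvd_iff.mpr h0) j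
  exact PowerSeries.X_pow_dvd_iff.mp hX m h

lemma coeff_psComp (Φ R : PowerSeries ℚ) (m : ℕ) :
    PowerSeries.coeff m (psComp Φ R) = ∑ k ∈ Finset.range (m + 1),
      (PowerSeries.coeff k Φ) * PowerSeries.coeff m (R ^ k) := by
  simp [psComp]

lemma coeff_psComp_ext (Φ R : PowerSeries ℚ) (h0 : PowerSeries.constantCoeff R = 0)
    {m N : ℕ} (h : m ≤ N) :
    PowerSeries.coeff m (psComp Φ R) = ∑ k ∈ Finset.range (N + 1),
      (PowerSeries.coeff k Φ) * PowerSeries.coeff m (R ^ k) := by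
  rw [coeff_psComp]
  apply Finset.sum_subset
  · exact Finset.range_subset_range.mpr (by omega)
  · intro k _ hk
    rw [coeff_pow_zero_of_lt R h0 (by simp at hk ⊢; omega), mul_zero]

lemma psComp_mul (Φ Ψ R : PowerSeries ℚ) (h0 : PowerSeries.constantCoeff R = 0) :
    psComp Φ R * psComp Ψ R = psComp (Φ * Ψ) R := by
  ext m
  rw [PowerSeries.coeff_mul]
  have hL : ∀ p ∈ Finset.HasAntidiagonal.antidiagonal m,
      (PowerSeries.coeff p.1 (psComp Φ R)) * (PowerSeries.coeff p.2 (psComp Ψ R)) =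
      ∑ a ∈ Finset.range (m+1), ∑ b ∈ Finset.range (m+1),
        (PowerSeries.coeff a Φ * PowerSeries.coeff p.1 (R ^ a)) *
        (PowerSeries.coeff b Ψ * PowerSeries.coeff p.2 (R ^ b)) := by
    intro p hp
    rw [Finset.HasAntidiagonal.mem_antidiagonal] at hp
    rw [coeff_psComp_ext Φ R h0 (show p.1 ≤ m by omega),
        coeff_psComp_ext Ψ R h0 (show p.2 ≤ m by omega), Finset.sum_mul_sum]
  rw [Finset.sum_congr rfl hL, Finset.sum_comm]
  have hswap : ∀ a ∈ Finset.range (m+1),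
      (∑ p ∈ Finset.HasAntidiagonal.antidiagonal m, ∑ b ∈ Finset.range (m+1),
        (PowerSeries.coeff a Φ * PowerSeries.coeff p.1 (R ^ a)) *
        (PowerSeries.coeff b Ψ * PowerSeries.coeff p.2 (R ^ b))) =
      ∑ b ∈ Finset.range (m+1),
        (PowerSeries.coeff a Φ) * (PowerSeries.coeff b Ψ) *
          PowerSeries.coeff m (R ^ (a + b)) := by
    intro a _
    rw [Finset.sum_comm]
    refine Finset.sum_congr rfl fun b _ => ?_
    rw [pow_add, PowerSeries.coeff_mul, Finset.mul_sum]
    refine Finset.sum_congr rfl fun p _ => ?_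
    ring
  rw [Finset.sum_congr rfl hswap]
  rw [coeff_psComp_ext (Φ * Ψ) R h0 (le_refl m)]
  have hRR : ∀ c ∈ Finset.range (m+1),
      (PowerSeries.coeff c (Φ * Ψ)) * PowerSeries.coeff m (R ^ c) =
      ∑ q ∈ Finset.HasAntidiagonal.antidiagonal c,
        (PowerSeries.coeff q.1 Φ) * (PowerSeries.coeff q.2 Ψ) *
          PowerSeries.coeff m (R ^ (q.1 + q.2)) := by
    intro c hc
    rw [PowerSeries.coeff_mul, Finset.sum_mul]
    refine Finset.sum_congr rfl fun q hq => ?_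
    rw [Finset.HasAntidiagonal.mem_antidiagonal] at hq
    rw [hq]
  rw [Finset.sum_congr rfl hRR]
  rw [← Finset.sum_product', Finset.sum_sigma']
  set g : ℕ × ℕ → ℚ := fun q =>
    (PowerSeries.coeff q.1 Φ) * (PowerSeries.coeff q.2 Ψ) *
      PowerSeries.coeff m (R ^ (q.1 + q.2)) with hg
  rw [← Finset.sum_filter_add_sum_filter_not (Finset.range (m+1) ×ˢ Finset.range (m+1))
    (fun x => x.1 + x.2 ≤ m)]
  have hz : ∑ x ∈ (Finset.range (m+1) ×ˢ Finset.range (m+1)).filter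
      (fun x => ¬ x.1 + x.2 ≤ m), g x = 0 := by
    refine Finset.sum_eq_zero fun x hx => ?_
    rw [Finset.mem_filter] at hx
    rw [hg]
    simp only
    rw [coeff_pow_zero_of_lt R h0 (by omega), mul_zero]
  rw [hz, add_zero]
  refine Finset.sum_nbij' (i := fun q => (⟨q.1 + q.2, q⟩ : Σ _ : ℕ, ℕ × ℕ))
    (j := fun s => s.2) ?_ ?_ ?_ ?_ ?_
  · intro q hq
    rw [Finset.mem_filter, Finset.mem_product, Finset.mem_range, Finset.mem_range] at hq
    exact Finset.mem_sigma.mpr ⟨Finset.mem_range.mpr (show q.1 + q.2 < m + 1 by omega),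
      Finset.HasAntidiagonal.mem_antidiagonal.mpr rfl⟩
  · intro s hs
    rw [Finset.mem_sigma, Finset.mem_range, Finset.HasAntidiagonal.mem_antidiagonal] at hs
    rw [Finset.mem_filter, Finset.mem_product, Finset.mem_range, Finset.mem_range]
    omega
  · intro q hq; rfl
  · intro s hs
    rw [Finset.mem_sigma, Finset.mem_range, Finset.HasAntidiagonal.mem_antidiagonal] at hs
    obtain ⟨c, q⟩ := s
    simp only at hs ⊢
    obtain ⟨_, h2⟩ := hs
    subst h2
    rfl
  · intro q hq; rfl

lemma pow_repr (R : PowerSeries ℚ) (h0 : PowerSeries.constantCoeff R = 0)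
    (hR : R = PowerSeries.X * psComp (PowerSeries.exp ℚ) R) (k : ℕ) (hk : 1 ≤ k) :
    R ^ k = PowerSeries.X ^ k * psComp (PowerSeries.rescale (k : ℚ) (PowerSeries.exp ℚ)) R := by
  induction k with
  | zero => omega
  | succ k ih =>
    rcases Nat.eq_or_lt_of_le hk with h1 | h1
    · have : k = 0 := by omega
      subst this
      simpa [PowerSeries.rescale_one] using hR
    · have hk' : 1 ≤ k := by omega
      have hmul : PowerSeries.rescale (k : ℚ) (PowerSeries.exp ℚ) * PowerSeries.exp ℚ =
          PowerSeries.rescale ((k : ℚ) + 1) (PowerSeries.exp ℚ) := by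
        have := PowerSeries.exp_mul_exp_eq_exp_add (k : ℚ) (1 : ℚ)
        rwa [PowerSeries.rescale_one, RingHom.id_apply] at this
      calc R ^ (k + 1) = R ^ k * R := by ring
        _ = (PowerSeries.X ^ k * psComp (PowerSeries.rescale (k : ℚ) (PowerSeries.exp ℚ)) R) *
            (PowerSeries.X * psComp (PowerSeries.exp ℚ) R) := by rw [← ih hk', ← hR]
        _ = PowerSeries.X ^ (k + 1) *
            (psComp (PowerSeries.rescale (k : ℚ) (PowerSeries.exp ℚ)) R *
             psComp (PowerSeries.exp ℚ) R) := by ring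
        _ = PowerSeries.X ^ (k + 1) *
            psComp (PowerSeries.rescale ((k : ℚ) + 1) (PowerSeries.exp ℚ)) R := by
          rw [psComp_mul _ _ _ h0, hmul]
        _ = PowerSeries.X ^ (k + 1) *
            psComp (PowerSeries.rescale ((k + 1 : ℕ) : ℚ) (PowerSeries.exp ℚ)) R := by
          push_cast; ring_nf

lemma key_identity (p k : ℕ) (hp : 1 ≤ p) :
    ∑ j ∈ Finset.range (p + 1),
      ((k : ℚ) ^ j / j.factorial) * (j * (p : ℚ) ^ (p - j) / ((p - j).factorial * p)) =
    (k : ℚ) * ((k : ℚ) + p) ^ (p - 1) / p.factorial := by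
  rw [Finset.sum_range_succ']
  simp only [Nat.cast_zero, zero_mul, zero_div, pow_zero, Nat.factorial_zero, mul_zero,
    zero_mul, add_zero, zero_div, mul_zero]
  have hbin : ((k : ℚ) + p) ^ (p - 1) =
      ∑ i ∈ Finset.range ((p - 1) + 1),
        (k : ℚ) ^ i * (p : ℚ) ^ (p - 1 - i) * ((p - 1).choose i) := by
    rw [add_pow]
  have hrange : (p - 1) + 1 = p := by omega
  rw [hbin, hrange, Finset.mul_sum, Finset.sum_div]
  refine Finset.sum_congr rfl fun i hi => ?_
  rw [Finset.mem_range] at hi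
  have hi' : i ≤ p - 1 := by omega
  have hch : ((p - 1).choose i * i.factorial * (p - 1 - i).factorial : ℚ) =
      ((p - 1).factorial : ℚ) := by
    exact_mod_cast congrArg (Nat.cast (R := ℚ)) (Nat.choose_mul_factorial_mul_factorial hi')
  have hpf : (p.factorial : ℚ) = p * (p - 1).factorial := by
    exact_mod_cast congrArg (Nat.cast (R := ℚ)) (Nat.mul_factorial_pred (by omega)).symm
  have he1 : p - (i + 1) = p - 1 - i := by omega
  have he2 : ((i + 1).factorial : ℚ) = (i + 1) * i.factorial := by
    exact_mod_cast congrArg (Nat.cast (R := ℚ)) (Nat.factorial_succ i)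
  rw [he1, he2]
  have h1 : (i.factorial : ℚ) ≠ 0 := Nat.cast_ne_zero.mpr (Nat.factorial_ne_zero i)
  have h2 : ((p - 1 - i).factorial : ℚ) ≠ 0 := Nat.cast_ne_zero.mpr (Nat.factorial_ne_zero _)
  have h3 : (p : ℚ) ≠ 0 := Nat.cast_ne_zero.mpr (by omega)
  have h4 : ((i : ℚ) + 1) ≠ 0 := by positivity
  have h5 : ((p - 1).factorial : ℚ) ≠ 0 := Nat.cast_ne_zero.mpr (Nat.factorial_ne_zero _)
  rw [hpf]
  field_simp
  rw [← hch]
  push_cast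
  ring

lemma main_formula (R : PowerSeries ℚ) (h0 : PowerSeries.constantCoeff R = 0)
    (hR : R = PowerSeries.X * psComp (PowerSeries.exp ℚ) R) :
    ∀ m, 1 ≤ m → ∀ k, 1 ≤ k → k ≤ m →
      PowerSeries.coeff m (R ^ k) =
        (k : ℚ) * (m : ℚ) ^ (m - k) / ((m - k).factorial * m) := by
  intro m
  induction m using Nat.strong_induction_on with
  | _ m IH =>
    intro hm k hk1 hkm
    set p := m - k with hp
    have hmpk : m = p + k := by omega
    rw [pow_repr R h0 hR k hk1, hmpk, PowerSeries.coeff_X_pow_mul, coeff_psComp]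
    have hcoeff : ∀ j, PowerSeries.coeff j (PowerSeries.rescale (k : ℚ)
        (PowerSeries.exp ℚ)) = (k : ℚ) ^ j / j.factorial := by
      intro j
      rw [PowerSeries.coeff_rescale, PowerSeries.coeff_exp]
      simp [div_eq_mul_inv]
    rcases Nat.eq_zero_or_pos p with hp0 | hp1
    · rw [hp0]
      have hk0 : ((k : ℚ)) ≠ 0 := Nat.cast_ne_zero.mpr (by omega)
      simp only [zero_add, Finset.sum_range_one, pow_zero, Nat.factorial_zero, Nat.cast_one,
        div_one, one_mul, Nat.cast_zero]
      rw [hcoeff 0, PowerSeries.coeff_zero_eq_constantCoeff, map_one]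
      simp [div_self hk0]
    · have hstep : ∀ j ∈ Finset.range (p + 1),
          (PowerSeries.coeff j (PowerSeries.rescale (k : ℚ) (PowerSeries.exp ℚ))) *
            PowerSeries.coeff p (R ^ j) =
          ((k : ℚ) ^ j / j.factorial) *
            ((j : ℚ) * (p : ℚ) ^ (p - j) / ((p - j).factorial * p)) := by
        intro j hj
        rw [Finset.mem_range] at hj
        rw [hcoeff]
        congr 1
        rcases Nat.eq_zero_or_pos j with hj0 | hj1
        · rw [hj0]
          simp only [pow_zero, PowerSeries.coeff_one, Nat.cast_zero, zero_mul, zero_div]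
          rw [if_neg (by omega)]
        · rw [IH p (by omega) hp1 j hj1 (by omega)]
      rw [Finset.sum_congr rfl hstep, key_identity p k hp1]
      have hcast : ((p + k : ℕ) : ℚ) = (k : ℚ) + p := by push_cast; ring
      rw [hcast]
      have hkp : ((k : ℚ) + p) ≠ 0 := by
        have : (1 : ℚ) ≤ (k : ℚ) := by exact_mod_cast hk1
        positivity
      have hpow : ((k : ℚ) + p) ^ (p - 1) * ((k : ℚ) + p) = ((k : ℚ) + p) ^ p := by
        rw [← pow_succ, Nat.sub_add_cancel hp1]
      rw [← hpow]
      have hfac : ((p.factorial : ℚ)) ≠ 0 := Nat.cast_ne_zero.mpr (Nat.factorial_ne_zero p)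
      field_simp

/-- If `R ∈ ℚ[[x]]` has zero constant term and satisfies `R = x · exp(R)`, then
for every `n ≥ 1` the coefficient of `x^n` in `R` equals `n^(n-1)/n!`. -/
theorem coeff_tree_function (R : PowerSeries ℚ)
    (h0 : PowerSeries.constantCoeff R = 0)
    (hR : R = PowerSeries.X * psComp (PowerSeries.exp ℚ) R)
    (n : ℕ) (hn : 1 ≤ n) :
    PowerSeries.coeff n R = (n : ℚ) ^ (n - 1) / (n.factorial : ℚ) := by
  have h := main_formula R h0 hR n hn 1 le_rfl hn
  rw [pow_one] at h
  rw [h, Nat.cast_one, one_mul]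
  have hfac : ((n - 1).factorial : ℚ) * n = (n.factorial : ℚ) := by
    have := Nat.mul_factorial_pred (show n ≠ 0 by omega)
    exact_mod_cast by rw [mul_comm]; exact_mod_cast congrArg (Nat.cast (R := ℚ)) this
  rw [hfac]
end

section
/- For every formal power series as above and every j ≥ 1, the j-th derivative R^(j)(x) can be written as P_j(x, R(x)) / (x^j · (1 − R(x))^(2j−1)) for some polynomial P_j; in particular, x^j·(1−R(x))^(2j−1)·R^(j)(x) is a polynomial expression in x and R(x). -/
open PowerSeries Finset

lemma coeff_derivativeFun' (f : ℚ⟦X⟧) (n : ℕ) :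
    coeff n (derivativeFun f) = coeff (n + 1) f * (n + 1) :=
  coeff_derivative f n

lemma coeff_pow_zero {R : PowerSeries ℚ} (h0 : constantCoeff R = 0)
    {k m : ℕ} (h : m < k) : coeff m (R ^ k) = 0 := by
  have hd : (X : ℚ⟦X⟧) ^ k ∣ R ^ k := pow_dvd_pow_of_dvd (X_dvd_iff.mpr h0) k
  exact (X_pow_dvd_iff.mp hd) m h

lemma psComp_trunc {R Φ : PowerSeries ℚ} (h0 : constantCoeff R = 0)
    {m N : ℕ} (h : m ≤ N) :
    coeff m (psComp Φ R) =
      coeff m (∑ k ∈ range (N + 1), C (coeff k Φ) * R ^ k) := by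
  rw [psComp, coeff_mk, map_sum]
  simp_rw [coeff_C_mul]
  apply Finset.sum_subset (by gcongr <;> omega)
  intro k hk hk'
  have : m < k := by simp only [mem_range] at hk hk'; omega
  rw [coeff_pow_zero h0 this, mul_zero]

lemma psComp_chain {R Φ : PowerSeries ℚ} (h0 : constantCoeff R = 0) :
    derivativeFun (psComp Φ R) = psComp (derivativeFun Φ) R * derivativeFun R := by
  ext m
  set T : ℚ⟦X⟧ := ∑ l ∈ range (m + 1), C (coeff l (derivativeFun Φ)) * R ^ l with hT
  have key : derivativeFun (∑ k ∈ range (m + 1 + 1), C (coeff k Φ) * R ^ k)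
      = T * derivativeFun R := by
    have : derivativeFun (∑ k ∈ range (m + 1 + 1), C (coeff k Φ) * R ^ k)
        = (d⁄dX ℚ) (∑ k ∈ range (m + 1 + 1), C (coeff k Φ) * R ^ k) := rfl
    rw [this, map_sum]
    have step : ∀ k, (d⁄dX ℚ) (C (coeff k Φ) * R ^ k)
        = (C (coeff k Φ) * (k : ℚ⟦X⟧) * R ^ (k - 1)) * derivativeFun R := by
      intro k
      rw [Derivation.leibniz, Derivation.leibniz_pow, derivative_C]
      show C (coeff k Φ) • (k • R ^ (k-1) • derivativeFun R) + R ^ k • (0:ℚ⟦X⟧) = _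
      rw [smul_zero, add_zero]
      simp only [smul_eq_mul, nsmul_eq_mul]
      ring
    simp_rw [step, ← Finset.sum_mul]
    congr 1
    rw [Finset.sum_range_succ' (fun k => C (coeff k Φ) * (k:ℚ⟦X⟧) * R ^ (k-1)), hT]
    simp only [coeff_derivativeFun', map_mul, Nat.cast_zero, mul_zero, zero_mul, add_zero]
    apply Finset.sum_congr rfl
    intro l _
    rw [map_add, map_one, map_natCast]
    push_cast
    ring
  rw [coeff_derivativeFun', psComp_trunc h0 (le_refl (m+1)), ← coeff_derivativeFun', key,
    coeff_mul, coeff_mul]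
  apply Finset.sum_congr rfl
  intro p hp
  rw [psComp_trunc h0 (N := m) (Finset.HasAntidiagonal.antidiagonal.fst_le hp)]

lemma derivFun_exp : derivativeFun (exp ℚ) = exp ℚ := by
  ext n
  rw [coeff_derivativeFun', coeff_exp, coeff_exp]
  simp only [eq_ratCast, Rat.cast_div, Rat.cast_one, Rat.cast_natCast]
  rw [Nat.factorial_succ]
  push_cast
  have h1 : (n:ℚ) + 1 ≠ 0 := by positivity
  have h2 : (n.factorial:ℚ) ≠ 0 := Nat.cast_ne_zero.mpr n.factorial_ne_zero
  field_simp

lemma key_identity_s6 {R : PowerSeries ℚ} (h0 : constantCoeff R = 0)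
    (hR : R = X * psComp (exp ℚ) R) :
    X * (1 - R) * derivativeFun R = R := by
  set E := psComp (exp ℚ) R with hE
  have hDE : derivativeFun E = E * derivativeFun R := by
    rw [hE, psComp_chain h0, derivFun_exp]
  have hDR : derivativeFun R = X * (E * derivativeFun R) + E * 1 := by
    nth_rewrite 1 [hR]
    rw [derivativeFun_mul]
    show X * derivativeFun E + E * derivativeFun X = _
    rw [hDE]
    congr 1
    congr 1
    exact derivative_X
  linear_combination X * hDR - (X * derivativeFun R + 1) * hR

lemma deriv_aeval (R : PowerSeries ℚ) (P : MvPolynomial (Fin 2) ℚ) :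
    derivativeFun (MvPolynomial.aeval ![X, R] P) =
      MvPolynomial.aeval ![(X : ℚ⟦X⟧), R] (MvPolynomial.pderiv 0 P) +
        MvPolynomial.aeval ![(X : ℚ⟦X⟧), R] (MvPolynomial.pderiv 1 P) * derivativeFun R := by
  induction P using MvPolynomial.induction_on with
  | C a =>
      rw [MvPolynomial.aeval_C, show MvPolynomial.pderiv 0 (MvPolynomial.C a : MvPolynomial (Fin 2) ℚ) = 0 from MvPolynomial.pderiv_C,
        show MvPolynomial.pderiv 1 (MvPolynomial.C a : MvPolynomial (Fin 2) ℚ) = 0 from MvPolynomial.pderiv_C,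
        PowerSeries.algebraMap_apply]
      simp [derivativeFun_C]
      exact derivative_C
  | add p q hp hq =>
      simp only [map_add, derivativeFun_add, hp, hq]
      ring
  | mul_X p i hp =>
      have hm : derivativeFun (MvPolynomial.aeval ![(X:ℚ⟦X⟧), R] p * MvPolynomial.aeval ![(X:ℚ⟦X⟧), R] (MvPolynomial.X i : MvPolynomial (Fin 2) ℚ))
          = MvPolynomial.aeval ![(X:ℚ⟦X⟧), R] p * derivativeFun (MvPolynomial.aeval ![(X:ℚ⟦X⟧), R] (MvPolynomial.X i : MvPolynomial (Fin 2) ℚ))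
            + MvPolynomial.aeval ![(X:ℚ⟦X⟧), R] (MvPolynomial.X i : MvPolynomial (Fin 2) ℚ) * derivativeFun (MvPolynomial.aeval ![(X:ℚ⟦X⟧), R] p) := by
        rw [derivativeFun_mul]; simp only [smul_eq_mul]; try ring
      rw [map_mul, hm, hp]
      have hDX : derivativeFun (X : ℚ⟦X⟧) = 1 := derivative_X
      fin_cases i <;>
        simp [MvPolynomial.pderiv_mul, MvPolynomial.pderiv_X, Pi.single, Function.update, hDX] <;>
        ring

lemma derivFun_pow (f : ℚ⟦X⟧) (n : ℕ) :
    derivativeFun (f ^ (n + 1)) = ((n + 1 : ℕ) : ℚ⟦X⟧) * f ^ n * derivativeFun f := by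
  have h := Derivation.leibniz_pow (d⁄dX ℚ) (a := f) (n + 1)
  rw [show derivativeFun (f ^ (n+1)) = (d⁄dX ℚ) (f ^ (n+1)) from rfl, h]
  simp only [smul_eq_mul, nsmul_eq_mul, Nat.add_sub_cancel]
  show ((n+1 : ℕ) : ℚ⟦X⟧) * (f ^ n * derivativeFun f) = _
  ring

/-- For the tree function `R` (with `R(0) = 0` and `R = x·exp(R)`) and every `j ≥ 1`,
`x^j·(1−R)^(2j−1)·R^(j)(x)` is a polynomial expression `P_j(x, R(x))` in `x` and `R(x)`,
i.e. the `j`-th derivative `R^(j)` equals `P_j(x,R(x)) / (x^j (1−R)^(2j−1))`. -/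
theorem tree_function_higher_derivatives (R : PowerSeries ℚ)
    (h0 : PowerSeries.constantCoeff R = 0)
    (hR : R = PowerSeries.X * psComp (PowerSeries.exp ℚ) R)
    (j : ℕ) (hj : 1 ≤ j) :
    ∃ P : MvPolynomial (Fin 2) ℚ,
      PowerSeries.X ^ j * (1 - R) ^ (2 * j - 1) * (PowerSeries.derivativeFun^[j] R) =
        MvPolynomial.aeval ![PowerSeries.X, R] P := by
  obtain ⟨i, rfl⟩ : ∃ i, j = i + 1 := ⟨j - 1, by omega⟩
  clear hj
  have hk := key_identity_s6 h0 hR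
  induction i with
  | zero =>
      refine ⟨MvPolynomial.X 1, ?_⟩
      have : 2 * 1 - 1 = 1 := rfl
      rw [zero_add, this, pow_one, pow_one, Function.iterate_one, MvPolynomial.aeval_X]
      simpa using hk
  | succ i ih =>
      obtain ⟨P, hP⟩ := ih
      rw [show 2 * (i + 1) - 1 = 2 * i + 1 from by omega] at hP
      rw [show 2 * (i + 1 + 1) - 1 = 2 * i + 1 + 2 from by omega,
        show i + 1 + 1 = (i + 1) + 1 from rfl]
      set F : ℚ⟦X⟧ := derivativeFun^[i + 1] R with hF
      have hiter : derivativeFun^[i + 1 + 1] R = derivativeFun F := by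
        rw [Function.iterate_succ_apply']
      rw [hiter]
      set A0 : ℚ⟦X⟧ := MvPolynomial.aeval ![X, R] (MvPolynomial.pderiv 0 P) with hA0
      set A1 : ℚ⟦X⟧ := MvPolynomial.aeval ![X, R] (MvPolynomial.pderiv 1 P) with hA1
      set AP : ℚ⟦X⟧ := MvPolynomial.aeval ![X, R] P with hAP
      -- derivative of hP
      have hD : X ^ (i+1) * (1 - R) ^ (2*i+1) * derivativeFun F
            + F * (X ^ (i+1) * (((2*i+1 : ℕ) : ℚ⟦X⟧) * (1-R)^(2*i) * (- derivativeFun R))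
              + (1-R)^(2*i+1) * (((i+1 : ℕ) : ℚ⟦X⟧) * X ^ i))
          = A0 + A1 * derivativeFun R := by
        have h1 : derivativeFun (X ^ (i+1) * (1 - R) ^ (2*i+1) * F)
            = derivativeFun (MvPolynomial.aeval ![X, R] P) := by rw [hP]
        rw [deriv_aeval] at h1
        rw [derivativeFun_mul, derivativeFun_mul] at h1
        have hsub : derivativeFun (1 - R) = - derivativeFun R := by
          rw [show derivativeFun (1 - R) = (d⁄dX ℚ) (1 - R) from rfl, map_sub,
            Derivation.map_one_eq_zero, zero_sub]
          rfl
        have hDB : derivativeFun ((1 - R) ^ (2*i+1))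
            = ((2*i+1 : ℕ) : ℚ⟦X⟧) * (1-R)^(2*i) * (- derivativeFun R) := by
          rw [derivFun_pow, hsub]
        have hDA : derivativeFun ((X : ℚ⟦X⟧) ^ (i+1)) = ((i+1 : ℕ) : ℚ⟦X⟧) * X ^ i := by
          rw [derivFun_pow, show derivativeFun (X : ℚ⟦X⟧) = 1 from derivative_X, mul_one]
        rw [hDB, hDA] at h1
        simp only [smul_eq_mul] at h1
        linear_combination h1
      refine ⟨(MvPolynomial.X 0) * (1 - MvPolynomial.X 1)^2 * MvPolynomial.pderiv 0 P
          + (1 - MvPolynomial.X 1) * (MvPolynomial.X 1) * MvPolynomial.pderiv 1 P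
          + ((2*i+1 : ℕ) : MvPolynomial (Fin 2) ℚ) * (MvPolynomial.X 1) * P
          - ((i+1 : ℕ) : MvPolynomial (Fin 2) ℚ) * (1 - MvPolynomial.X 1)^2 * P, ?_⟩
      have haev : MvPolynomial.aeval ![(X:ℚ⟦X⟧), R] ((MvPolynomial.X 0) * (1 - MvPolynomial.X 1)^2 * MvPolynomial.pderiv 0 P
          + (1 - MvPolynomial.X 1) * (MvPolynomial.X 1) * MvPolynomial.pderiv 1 P
          + ((2*i+1 : ℕ) : MvPolynomial (Fin 2) ℚ) * (MvPolynomial.X 1) * P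
          - ((i+1 : ℕ) : MvPolynomial (Fin 2) ℚ) * (1 - MvPolynomial.X 1)^2 * P)
          = X * (1-R)^2 * A0 + (1-R) * R * A1
            + ((2*i+1 : ℕ) : ℚ⟦X⟧) * R * AP
            - ((i+1 : ℕ) : ℚ⟦X⟧) * (1-R)^2 * AP := by
        simp only [map_add, map_sub, map_mul, map_pow, map_one, map_natCast,
          MvPolynomial.aeval_X, Matrix.cons_val_zero, Matrix.cons_val_one, Matrix.head_cons,
          hA0, hA1, hAP]
      rw [haev]
      push_cast at hD ⊢
      linear_combination (X*(1-R)^2) * hD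
        + ((1-R)*A1 + (2*(i:ℚ⟦X⟧)+1)*AP) * hk
        + ((2*(i:ℚ⟦X⟧)+1)*X*(1-R)*(derivativeFun R) - ((i:ℚ⟦X⟧)+1)*(1-R)^2) * hP
end

section
/- Define W_n = (n!/n^(n−1)) · Σ_{k=0}^{n−2} n^k/k! for n ≥ 2. Then W_n / n^(3/2) tends to √(π/2) as n → ∞. -/
open Filter
open MeasureTheory Set Real

lemma log_aux_mono {g g' : ℝ → ℝ} (hd : ∀ y ∈ Set.Ici (0:ℝ), HasDerivAt g (g' y) y)
    (hpos : ∀ y ∈ Set.Ici (0:ℝ), 0 ≤ g' y) {x : ℝ} (hx : 0 ≤ x) : g 0 ≤ g x := by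
  have mono : MonotoneOn g (Set.Ici 0) := by
    apply monotoneOn_of_deriv_nonneg (convex_Ici 0)
    · exact fun y hy => (hd y hy).continuousAt.continuousWithinAt
    · intro y hy
      rw [interior_Ici] at hy
      exact ((hd y (Set.mem_Ioi.mp hy).le).differentiableAt).differentiableWithinAt
    · intro y hy
      rw [interior_Ici] at hy
      rw [(hd y (Set.mem_Ioi.mp hy).le).deriv]
      exact hpos y (Set.mem_Ioi.mp hy).le
  exact mono Set.self_mem_Ici hx hx

lemma hasDerivAt_log1p {y : ℝ} (hy : 0 ≤ y) :
    HasDerivAt (fun t : ℝ => Real.log (1 + t)) (1 / (1 + y)) y := by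
  have h1 : HasDerivAt (fun t : ℝ => 1 + t) 1 y := by
    simpa using (hasDerivAt_id y).const_add (1 : ℝ)
  have := h1.log (by linarith : (1:ℝ) + y ≠ 0)
  simpa using this

lemma log_ge_quad {x : ℝ} (hx : 0 ≤ x) : x - x ^ 2 / 2 ≤ Real.log (1 + x) := by
  have h := log_aux_mono (g := fun t => Real.log (1 + t) - (t - t ^ 2 / 2))
    (g' := fun y => y ^ 2 / (1 + y)) ?_ ?_ hx
  · simpa using h
  · intro y hy
    have hy' : (0:ℝ) ≤ y := hy
    have h3 : HasDerivAt (fun t : ℝ => t - t ^ 2 / 2) (1 - y) y := by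
      have := (hasDerivAt_id y).fun_sub ((hasDerivAt_pow 2 y).div_const 2)
      simpa using this.congr_deriv (by push_cast; ring)
    have := (hasDerivAt_log1p hy').fun_sub h3
    refine this.congr_deriv ?_
    field_simp
    ring
  · intro y hy
    have : (0:ℝ) ≤ y := hy
    positivity

lemma log_le_cubic {x : ℝ} (hx : 0 ≤ x) : Real.log (1 + x) ≤ x - x ^ 2 / 2 + x ^ 3 / 3 := by
  have h := log_aux_mono (g := fun t => t - t ^ 2 / 2 + t ^ 3 / 3 - Real.log (1 + t))
    (g' := fun y => y ^ 3 / (1 + y)) ?_ ?_ hx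
  · simpa using h
  · intro y hy
    have hy' : (0:ℝ) ≤ y := hy
    have h3 : HasDerivAt (fun t : ℝ => t - t ^ 2 / 2 + t ^ 3 / 3) (1 - y + y ^ 2) y := by
      have := ((hasDerivAt_id y).fun_sub ((hasDerivAt_pow 2 y).div_const 2)).fun_add
        ((hasDerivAt_pow 3 y).div_const 3)
      simpa using this.congr_deriv (by push_cast; ring)
    have := h3.fun_sub (hasDerivAt_log1p hy')
    refine this.congr_deriv ?_
    field_simp
    ring
  · intro y hy
    have : (0:ℝ) ≤ y := hy
    positivity

lemma gamma_tail (m : ℕ) {x : ℝ} (hx : 0 ≤ x) :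
    ∫ t in Set.Ioi x, t ^ m * Real.exp (-t) =
      Real.exp (-x) * ∑ j ∈ Finset.range (m + 1), ((m.factorial : ℝ) / (j.factorial : ℝ)) * x ^ j := by
  set P : ℝ → ℝ := fun t => ∑ j ∈ Finset.range (m + 1), ((m.factorial : ℝ) / (j.factorial : ℝ)) * t ^ j with hP
  have hPderiv : ∀ t : ℝ, HasDerivAt P (∑ j ∈ Finset.range m, ((m.factorial : ℝ) / (j.factorial : ℝ)) * t ^ j) t := by
    intro t
    have h : HasDerivAt P (∑ j ∈ Finset.range (m + 1),
        ((m.factorial : ℝ) / (j.factorial : ℝ)) * (j * t ^ (j - 1))) t := by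
      apply HasDerivAt.fun_sum
      intro j _
      exact (hasDerivAt_pow j t).const_mul _
    convert h using 1
    rw [Finset.sum_range_succ']
    simp only [Nat.cast_zero, zero_mul, mul_zero, add_zero]
    apply Finset.sum_congr rfl
    intro i _
    have : ((i + 1).factorial : ℝ) = (i + 1) * (i.factorial : ℝ) := by
      rw [Nat.factorial_succ]; push_cast; ring
    rw [this]
    have h1 : (i.factorial : ℝ) ≠ 0 := Nat.cast_ne_zero.mpr i.factorial_ne_zero
    have h2 : ((i:ℝ) + 1) ≠ 0 := by positivity
    field_simp
    rw [Nat.add_sub_cancel]; push_cast; ring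
  have hfderiv : ∀ t : ℝ, HasDerivAt (fun t => -(Real.exp (-t) * P t)) (t ^ m * Real.exp (-t)) t := by
    intro t
    have hE : HasDerivAt (fun t : ℝ => Real.exp (-t)) (-Real.exp (-t)) t := by
      simpa using (hasDerivAt_neg' t).exp
    have := ((hE.fun_mul (hPderiv t)).fun_neg)
    refine this.congr_deriv ?_
    have hsplit : P t = (∑ j ∈ Finset.range m, ((m.factorial : ℝ) / (j.factorial : ℝ)) * t ^ j) + t ^ m := by
      rw [hP]
      simp only
      rw [Finset.sum_range_succ]
      congr 1
      rw [div_self (Nat.cast_ne_zero.mpr m.factorial_ne_zero), one_mul]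
    rw [hsplit]
    ring
  have hint : IntegrableOn (fun t : ℝ => t ^ m * Real.exp (-t)) (Set.Ioi x) := by
    have h0 : IntegrableOn (fun t : ℝ => Real.exp (-t) * t ^ ((m + 1 : ℝ) - 1)) (Set.Ioi 0) :=
      Real.GammaIntegral_convergent (by positivity)
    have h1 : IntegrableOn (fun t : ℝ => t ^ m * Real.exp (-t)) (Set.Ioi 0) := by
      apply (h0.congr_fun ?_ measurableSet_Ioi)
      intro t ht
      simp only
      rw [show (m + 1 : ℝ) - 1 = (m : ℝ) by ring, Real.rpow_natCast]
      ring
    exact h1.mono_set (Set.Ioi_subset_Ioi hx)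
  have hlim : Tendsto (fun t => -(Real.exp (-t) * P t)) atTop (nhds 0) := by
    have h : Tendsto (fun t : ℝ => ∑ j ∈ Finset.range (m + 1),
        ((m.factorial : ℝ) / (j.factorial : ℝ)) * (t ^ j * Real.exp (-t))) atTop (nhds 0) := by
      have := tendsto_finset_sum (Finset.range (m + 1)) (fun j _ =>
        (tendsto_pow_mul_exp_neg_atTop_nhds_zero j).const_mul ((m.factorial : ℝ) / (j.factorial : ℝ)))
      simpa using this
    have heq : (fun t : ℝ => -(Real.exp (-t) * P t)) = fun t => -(∑ j ∈ Finset.range (m + 1),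
        ((m.factorial : ℝ) / (j.factorial : ℝ)) * (t ^ j * Real.exp (-t))) := by
      funext t
      rw [hP]
      simp only
      rw [Finset.mul_sum]
      congr 1
      apply Finset.sum_congr rfl
      intro j _
      ring
    rw [heq]
    simpa using h.neg
  have := integral_Ioi_of_hasDerivAt_of_tendsto' (a := x)
    (fun t _ => hfderiv t) hint hlim
  rw [this]
  simp [hP]

lemma shift_Ioi (f : ℝ → ℝ) (c : ℝ) :
    ∫ u in Set.Ioi (0:ℝ), f (u + c) = ∫ t in Set.Ioi c, f t := by
  have h := (measurePreserving_add_right (volume : Measure ℝ) c).setIntegral_preimage_emb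
    (measurableEmbedding_addRight c) f (Set.Ioi c)
  simpa using h

lemma subst_lemma (m : ℕ) {N : ℝ} (hN : 0 < N) :
    ∫ t in Set.Ioi N, t ^ m * Real.exp (-t) =
      Real.sqrt N * (N ^ m * Real.exp (-N) *
        ∫ u in Set.Ioi (0:ℝ), (1 + u / Real.sqrt N) ^ m * Real.exp (-(Real.sqrt N * u))) := by
  set s := Real.sqrt N with hs
  have hs0 : 0 < s := Real.sqrt_pos.mpr hN
  have hs2 : s ^ 2 = N := Real.sq_sqrt hN.le
  have h1 : ∫ t in Set.Ioi N, t ^ m * Real.exp (-t)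
      = ∫ v in Set.Ioi (0:ℝ), (v + N) ^ m * Real.exp (-(v + N)) :=
    (shift_Ioi (fun t => t ^ m * Real.exp (-t)) N).symm
  have h2 : ∫ u in Set.Ioi (0:ℝ), (s * u + N) ^ m * Real.exp (-(s * u + N))
      = s⁻¹ * ∫ v in Set.Ioi (0:ℝ), (v + N) ^ m * Real.exp (-(v + N)) := by
    have := integral_comp_mul_left_Ioi (fun v => (v + N) ^ m * Real.exp (-(v + N))) 0 hs0
    simpa [mul_zero, smul_eq_mul] using this
  have h3 : ∀ u : ℝ, (s * u + N) ^ m * Real.exp (-(s * u + N))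
      = (N ^ m * Real.exp (-N)) * ((1 + u / s) ^ m * Real.exp (-(s * u))) := by
    intro u
    have hNe : s * u + N = N * (1 + u / s) := by
      field_simp
      rw [← hs2]; ring
    rw [hNe, mul_pow, show -(N * (1 + u / s)) = -(s*u) + -N by rw [← hNe]; ring,
      Real.exp_add]
    ring
  rw [h1, eq_comm, mul_comm]
  rw [show (N ^ m * Real.exp (-N) * ∫ u in Set.Ioi (0:ℝ),
      (1 + u / s) ^ m * Real.exp (-(s * u))) = ∫ u in Set.Ioi (0:ℝ),
      (s * u + N) ^ m * Real.exp (-(s * u + N)) by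
    simp_rw [h3]; rw [MeasureTheory.integral_const_mul]]
  rw [h2]
  field_simp

/-- The average total height over all rooted labeled trees on `n` vertices:
`W_n = (n!/n^(n−1)) · Σ_{k=0}^{n−2} n^k/k!`. -/
noncomputable def W (n : ℕ) : ℝ :=
  ((n.factorial : ℝ) / (n : ℝ) ^ (n - 1)) *
    ∑ k ∈ Finset.range (n - 1), (n : ℝ) ^ k / (k.factorial : ℝ)

lemma W_eq (m : ℕ) :
    W (m + 2) = ((m : ℝ) + 1) * Real.sqrt ((m : ℝ) + 2) *
      ∫ u in Set.Ioi (0:ℝ), (1 + u / Real.sqrt ((m : ℝ) + 2)) ^ m *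
        Real.exp (-(Real.sqrt ((m : ℝ) + 2) * u)) := by
  set N : ℝ := (m : ℝ) + 2 with hNdef
  have hN : 0 < N := by positivity
  set I := ∫ u in Set.Ioi (0:ℝ), (1 + u / Real.sqrt N) ^ m * Real.exp (-(Real.sqrt N * u)) with hI
  have key : Real.exp (-N) * ∑ j ∈ Finset.range (m+1), ((m.factorial:ℝ)/(j.factorial:ℝ)) * N ^ j
      = Real.sqrt N * (N ^ m * Real.exp (-N) * I) := by
    rw [← gamma_tail m hN.le, subst_lemma m hN]
  have hm : (m.factorial : ℝ) ≠ 0 := Nat.cast_ne_zero.mpr m.factorial_ne_zero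
  have key2 : ∑ j ∈ Finset.range (m+1), ((m.factorial:ℝ)/(j.factorial:ℝ)) * N ^ j
      = Real.sqrt N * N ^ m * I := by
    apply mul_left_cancel₀ (a := Real.exp (-N)) (Real.exp_pos _).ne'
    rw [key]; ring
  have hsum : ∑ k ∈ Finset.range (m+1), N ^ k / (k.factorial:ℝ)
      = Real.sqrt N * N ^ m * I / (m.factorial:ℝ) := by
    rw [eq_div_iff hm, ← key2, Finset.sum_mul]
    apply Finset.sum_congr rfl
    intro k _
    have hk : (k.factorial : ℝ) ≠ 0 := Nat.cast_ne_zero.mpr k.factorial_ne_zero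
    field_simp
  rw [W]
  have h1 : (m + 2 - 1) = m + 1 := rfl
  rw [h1]
  have hcast : ((m + 2 : ℕ) : ℝ) = N := by rw [hNdef]; push_cast; ring
  rw [hcast, hsum]
  have hfac : (((m+2).factorial : ℕ) : ℝ) = ((m:ℝ)+2) * ((m:ℝ)+1) * (m.factorial:ℝ) := by
    rw [Nat.factorial_succ, Nat.factorial_succ]; push_cast; ring
  rw [hfac, pow_succ]
  have hNm : N ^ m ≠ 0 := by positivity
  field_simp
  ring

lemma sqrt_facts (m : ℕ) (u : ℝ) :
    0 < Real.sqrt ((m:ℝ)+2) ∧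
    Real.sqrt ((m:ℝ)+2) * u = ((m:ℝ)+2) * (u / Real.sqrt ((m:ℝ)+2)) ∧
    ((m:ℝ)+2) * (u / Real.sqrt ((m:ℝ)+2))^2 = u^2 ∧
    ((m:ℝ)+2) * (u / Real.sqrt ((m:ℝ)+2))^3 = u^3 / Real.sqrt ((m:ℝ)+2) := by
  set s := Real.sqrt ((m:ℝ)+2) with hsdef
  have hs0 : 0 < s := Real.sqrt_pos.mpr (by positivity)
  have hs2 : s^2 = (m:ℝ)+2 := Real.sq_sqrt (by positivity)
  refine ⟨hs0, ?_, ?_, ?_⟩ <;> rw [← hs2] <;> field_simp <;> ring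

lemma F_eq_exp (m : ℕ) {u : ℝ} (hu : 0 ≤ u) :
    (1 + u / Real.sqrt ((m:ℝ)+2)) ^ m * Real.exp (-(Real.sqrt ((m:ℝ)+2) * u))
      = Real.exp ((m:ℝ) * Real.log (1 + u / Real.sqrt ((m:ℝ)+2)) - Real.sqrt ((m:ℝ)+2) * u) := by
  obtain ⟨hs0, -, -, -⟩ := sqrt_facts m u
  have hx : 0 < 1 + u / Real.sqrt ((m:ℝ)+2) := by positivity
  rw [sub_eq_add_neg, Real.exp_add, Real.exp_nat_mul, Real.exp_log hx]

lemma F_tendsto {u : ℝ} (hu : 0 < u) :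
    Tendsto (fun m : ℕ => (1 + u / Real.sqrt ((m:ℝ)+2)) ^ m *
      Real.exp (-(Real.sqrt ((m:ℝ)+2) * u))) atTop (nhds (Real.exp (-(1/2) * u^2))) := by
  have hsf := fun m : ℕ => sqrt_facts m u
  have hs_tendsto : Tendsto (fun m : ℕ => Real.sqrt ((m:ℝ)+2)) atTop atTop := by
    have h1 : Tendsto Real.sqrt atTop atTop := by
      rw [show Real.sqrt = fun x : ℝ => x ^ (1/2 : ℝ) from funext Real.sqrt_eq_rpow]
      exact tendsto_rpow_atTop (by norm_num)
    exact h1.comp (tendsto_atTop_add_const_right _ 2 tendsto_natCast_atTop_atTop)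
  have hx_tendsto : Tendsto (fun m : ℕ => u / Real.sqrt ((m:ℝ)+2)) atTop (nhds 0) :=
    tendsto_const_nhds.div_atTop hs_tendsto
  have hlog : Tendsto (fun m : ℕ => Real.log (1 + u / Real.sqrt ((m:ℝ)+2))) atTop (nhds 0) := by
    have hc : ContinuousAt Real.log 1 := Real.continuousAt_log one_ne_zero
    have h2 : Tendsto (fun m : ℕ => 1 + u / Real.sqrt ((m:ℝ)+2)) atTop (nhds 1) := by
      simpa using tendsto_const_nhds.add hx_tendsto
    simpa using h2.log one_ne_zero
  have hmain : Tendsto (fun m : ℕ => ((m:ℝ)+2) *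
      (Real.log (1 + u / Real.sqrt ((m:ℝ)+2)) - u / Real.sqrt ((m:ℝ)+2)))
      atTop (nhds (-(1/2) * u^2)) := by
    apply tendsto_of_tendsto_of_tendsto_of_le_of_le
      (g := fun _ : ℕ => -(1/2)*u^2)
      (h := fun m : ℕ => -(1/2)*u^2 + u^3/3 * (Real.sqrt ((m:ℝ)+2))⁻¹)
      tendsto_const_nhds
    · have := (hs_tendsto.inv_tendsto_atTop).const_mul (u^3/3)
      simpa using tendsto_const_nhds.add this
    · intro m
      obtain ⟨hs0, hsu, hx2, hx3⟩ := hsf m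
      set x := u / Real.sqrt ((m:ℝ)+2) with hxdef
      have hx0 : 0 ≤ x := by positivity
      have h := log_ge_quad hx0
      nlinarith [h, hx2]
    · intro m
      obtain ⟨hs0, hsu, hx2, hx3⟩ := hsf m
      set x := u / Real.sqrt ((m:ℝ)+2) with hxdef
      have hx0 : 0 ≤ x := by positivity
      have h := log_le_cubic hx0
      have hm2 : (0:ℝ) ≤ (m:ℝ)+2 := by positivity
      have key : ((m:ℝ)+2) * (Real.log (1+x) - x) ≤ ((m:ℝ)+2) * (- x^2/2 + x^3/3) := by
        apply mul_le_mul_of_nonneg_left _ hm2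
        linarith
      calc ((m:ℝ)+2) * (Real.log (1+x) - x) ≤ ((m:ℝ)+2) * (- x^2/2 + x^3/3) := key
        _ = -(1/2) * (((m:ℝ)+2) * x^2) + (((m:ℝ)+2) * x^3)/3 := by ring
        _ = -(1/2)*u^2 + u^3/3 * (Real.sqrt ((m:ℝ)+2))⁻¹ := by
            rw [hx2, hx3]; field_simp
  have hE : Tendsto (fun m : ℕ => (m:ℝ) * Real.log (1 + u / Real.sqrt ((m:ℝ)+2))
      - Real.sqrt ((m:ℝ)+2) * u) atTop (nhds (-(1/2)*u^2)) := by
    have heq : ∀ m : ℕ, (m:ℝ) * Real.log (1 + u / Real.sqrt ((m:ℝ)+2))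
        - Real.sqrt ((m:ℝ)+2) * u
        = ((m:ℝ)+2) * (Real.log (1 + u / Real.sqrt ((m:ℝ)+2)) - u / Real.sqrt ((m:ℝ)+2))
          - 2 * Real.log (1 + u / Real.sqrt ((m:ℝ)+2)) := by
      intro m
      obtain ⟨hs0, hsu, -, -⟩ := hsf m
      rw [hsu]; ring
    have h := hmain.sub (hlog.const_mul 2)
    simp only [mul_zero, sub_zero] at h
    exact h.congr (fun m => (heq m).symm)
  have hfinal := (Real.continuous_exp.tendsto _).comp hE
  apply hfinal.congr
  intro m
  exact (F_eq_exp m hu.le).symm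


lemma F_bound (m : ℕ) {u : ℝ} (hu : 0 < u) :
    (1 + u / Real.sqrt ((m:ℝ)+2)) ^ m * Real.exp (-(Real.sqrt ((m:ℝ)+2) * u))
      ≤ Real.exp (-(1/6) * u^2) + Real.exp (-(1/4) * u) := by
  obtain ⟨hs0, hsu, hx2, hx3⟩ := sqrt_facts m u
  have hs1 : 1 ≤ Real.sqrt ((m:ℝ)+2) := by
    rw [Real.one_le_sqrt]; linarith [Nat.cast_nonneg (α := ℝ) m]
  rw [F_eq_exp m hu.le]
  set s := Real.sqrt ((m:ℝ)+2) with hsdef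
  set x := u / s with hxdef
  have hx0 : 0 < x := div_pos hu hs0
  have hlog0 : 0 ≤ Real.log (1 + x) := Real.log_nonneg (by linarith)
  have hexp_le : (m:ℝ) * Real.log (1 + x) - s * u ≤ ((m:ℝ)+2) * (Real.log (1 + x) - x) := by
    rw [hsu]; nlinarith [hlog0]
  rcases le_or_gt x 1 with hx1 | hx1
  · have h1 : Real.log (1 + x) - x ≤ -(x^2/6) := by
      have h := log_le_cubic hx0.le
      nlinarith [sq_nonneg x, mul_le_mul_of_nonneg_left hx1 (sq_nonneg x)]
    have h2 : (m:ℝ) * Real.log (1 + x) - s * u ≤ -(1/6) * u^2 := by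
      have := mul_le_mul_of_nonneg_left h1 (show (0:ℝ) ≤ (m:ℝ)+2 by positivity)
      calc (m:ℝ) * Real.log (1 + x) - s * u ≤ ((m:ℝ)+2) * (Real.log (1 + x) - x) := hexp_le
        _ ≤ ((m:ℝ)+2) * (-(x^2/6)) := this
        _ = -(1/6) * (((m:ℝ)+2) * x^2) := by ring
        _ = -(1/6) * u^2 := by rw [hx2]
    have := Real.exp_le_exp.mpr h2
    have hpos := (Real.exp_pos (-(1/4) * u)).le
    linarith
  · have hlog2 : Real.log (1 + x) ≤ Real.log 2 + (x - 1)/2 := by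
      have h := Real.log_le_sub_one_of_pos (show (0:ℝ) < (1 + x)/2 by linarith)
      rw [Real.log_div (by linarith) two_ne_zero] at h
      linarith
    have hl2u : Real.log 2 ≤ 3/4 := by nlinarith [Real.log_two_lt_d9]
    have hl2l : 1/2 ≤ Real.log 2 := by nlinarith [Real.log_two_gt_d9]
    have h1 : Real.log (1 + x) - x ≤ (Real.log 2 - 1) * x := by nlinarith
    have h2 : (m:ℝ) * Real.log (1 + x) - s * u ≤ -(1/4) * u := by
      have hA : ((m:ℝ)+2) * (Real.log (1 + x) - x) ≤ ((m:ℝ)+2) * ((Real.log 2 - 1) * x) :=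
        mul_le_mul_of_nonneg_left h1 (by positivity)
      have hB : ((m:ℝ)+2) * ((Real.log 2 - 1) * x) = (Real.log 2 - 1) * (s * u) := by
        rw [hsu]; ring
      have hC : (Real.log 2 - 1) * (s * u) ≤ (Real.log 2 - 1) * u := by
        have hneg : Real.log 2 - 1 ≤ 0 := by linarith
        have hsu1 : u ≤ s * u := by nlinarith
        exact mul_le_mul_of_nonpos_left hsu1 hneg
      have hD : (Real.log 2 - 1) * u ≤ -(1/4) * u := by nlinarith
      linarith [hexp_le]
    have := Real.exp_le_exp.mpr h2
    have hpos := (Real.exp_pos (-(1/6) * u^2)).le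
    linarith

lemma integral_tendsto :
    Tendsto (fun m : ℕ => ∫ u in Set.Ioi (0:ℝ), (1 + u / Real.sqrt ((m:ℝ)+2)) ^ m *
      Real.exp (-(Real.sqrt ((m:ℝ)+2) * u))) atTop (nhds (Real.sqrt (Real.pi / 2))) := by
  have hgauss : ∫ u in Set.Ioi (0:ℝ), Real.exp (-(1/2) * u^2) = Real.sqrt (Real.pi/2) := by
    rw [integral_gaussian_Ioi]
    rw [show Real.pi / (1/2) = 2^2 * (Real.pi/2) by ring,
      Real.sqrt_mul (by positivity), Real.sqrt_sq (by norm_num)]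
    ring
  rw [← hgauss]
  apply tendsto_integral_filter_of_dominated_convergence
    (fun u => Real.exp (-(1/6) * u^2) + Real.exp (-(1/4) * u))
  · apply Eventually.of_forall
    intro m
    apply Continuous.aestronglyMeasurable
    fun_prop
  · apply Eventually.of_forall
    intro m
    rw [ae_restrict_iff' measurableSet_Ioi]
    apply Eventually.of_forall
    intro u hu
    have hs0 : 0 < Real.sqrt ((m:ℝ)+2) := Real.sqrt_pos.mpr (by positivity)
    have hu' : (0:ℝ) < u := hu
    rw [Real.norm_eq_abs, abs_of_nonneg (by positivity)]
    exact F_bound m hu'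
  · apply Integrable.add
    · exact (integrable_exp_neg_mul_sq (by norm_num : (0:ℝ) < 1/6)).integrableOn
    · exact exp_neg_integrableOn_Ioi 0 (by norm_num : (0:ℝ) < 1/4)
  · rw [ae_restrict_iff' measurableSet_Ioi]
    apply Eventually.of_forall
    intro u hu
    exact F_tendsto hu

set_option maxHeartbeats 1000000 in
/-- `W_n / n^(3/2) → √(π/2)` as `n → ∞`, i.e. `W_n ~ n^(3/2)·√(π/2)`. -/
theorem W_asymptotics :
    Tendsto (fun n : ℕ => W n / (n : ℝ) ^ ((3 : ℝ) / 2)) atTop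
      (nhds (Real.sqrt (Real.pi / 2))) := by
  rw [← tendsto_add_atTop_iff_nat (f := fun n : ℕ => W n / (n : ℝ) ^ ((3 : ℝ) / 2)) 2]
  have heq : ∀ m : ℕ, W (m+2) / ((m+2:ℕ):ℝ) ^ ((3:ℝ)/2)
      = (((m:ℝ)+1)/((m:ℝ)+2)) * ∫ u in Set.Ioi (0:ℝ),
          (1 + u / Real.sqrt ((m:ℝ)+2)) ^ m * Real.exp (-(Real.sqrt ((m:ℝ)+2) * u)) := by
    intro m
    have hN : (0:ℝ) < (m:ℝ)+2 := by positivity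
    have hcast : ((m+2:ℕ):ℝ) = (m:ℝ)+2 := by push_cast; ring
    rw [W_eq m, hcast]
    rw [show ((m:ℝ)+2) ^ ((3:ℝ)/2) = ((m:ℝ)+2) * Real.sqrt ((m:ℝ)+2) by
      rw [Real.sqrt_eq_rpow, show (3:ℝ)/2 = 1 + 1/2 by norm_num, Real.rpow_add hN, Real.rpow_one]]
    have hs0 : (0:ℝ) < Real.sqrt ((m:ℝ)+2) := Real.sqrt_pos.mpr hN
    field_simp
  have hlim1 : Tendsto (fun m : ℕ => ((m:ℝ)+1)/((m:ℝ)+2)) atTop (nhds 1) := by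
    have h2 : Tendsto (fun m : ℕ => (1:ℝ) - 1/((m:ℝ)+2)) atTop (nhds 1) := by
      have h3 := Tendsto.const_div_atTop
        (tendsto_atTop_add_const_right _ 2 tendsto_natCast_atTop_atTop) (1:ℝ)
      simpa using tendsto_const_nhds.sub h3
    apply h2.congr
    intro m
    have : ((m:ℝ)+2) ≠ 0 := by positivity
    field_simp
    ring
  have hmul := hlim1.mul integral_tendsto
  rw [one_mul] at hmul
  exact hmul.congr (fun m => (heq m).symm)
end
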